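/- arXiv:0901.2358 — 3 statements merged into one kernel-verified Lean document; each statement's English description precedes it below -/
import Mathlib

section
/- For all t > 0 and k > 0, the mode function v(t,k) solves the radial de Sitter Klein–Gordon ODE: t²·∂²v/∂t²(t,k) − 2t·∂v/∂t(t,k) + ((kt)² + (mR)²)·v(t,k) = 0. -/
open Complex MeasureTheory Filter
open scoped RealInnerProductSpace

noncomputable section

/-- Three-dimensional Euclidean space. -/
abbrev V3 : Type := EuclideanSpace ℝ (Fin 3)

/-- The Bessel function of complex order `α`:
`J_α(x) = Σ_{n=0}^∞ ((−1)^n/(n!·Γ(α+n+1)))·exp((α+2n)·log(x/2))`. -/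
def besselJ (α : ℂ) (x : ℝ) : ℂ :=
  ∑' n : ℕ, ((-1 : ℂ) ^ n / ((n.factorial : ℂ) * Complex.Gamma (α + (n : ℂ) + 1))) *
    Complex.exp ((α + 2 * (n : ℂ)) * (Real.log (x / 2) : ℂ))

/-- The Hankel function of the first kind. -/
def hankel1 (α : ℂ) (x : ℝ) : ℂ :=
  (besselJ (-α) x - Complex.exp (-(Complex.I * (Real.pi : ℂ) * α)) * besselJ α x) /
    (Complex.I * Complex.sin (α * (Real.pi : ℂ)))

/-- The Hankel function of the second kind. -/
def hankel2 (α : ℂ) (x : ℝ) : ℂ :=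
  (Complex.exp (Complex.I * (Real.pi : ℂ) * α) * besselJ α x - besselJ (-α) x) /
    (Complex.I * Complex.sin (α * (Real.pi : ℂ)))

/-- `μ = √((mR)² − 9/4)`. -/
def modeMu (m R : ℝ) : ℝ := Real.sqrt ((m * R) ^ 2 - 9 / 4)

/-- `ν = iμ`. -/
def modeNu (m R : ℝ) : ℂ := Complex.I * (modeMu m R : ℂ)

/-- The mode function `v(t,k) = e^{−μπ/2}·t^{3/2}·H^{(1)}_ν(kt)`. -/
def modeV (m R t k : ℝ) : ℂ :=
  (Real.exp (-(modeMu m R * Real.pi / 2)) : ℂ) * ((t ^ ((3 : ℝ) / 2) : ℝ) : ℂ) *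
    hankel1 (modeNu m R) (k * t)

/-- `v′(t,k) = ∂v/∂t (t,k)`. -/
def modeV' (m R t k : ℝ) : ℂ := deriv (fun s => modeV m R s k) t

/-- `ω(k) = √(1+k²)`. -/
def omegaK (k : ℝ) : ℝ := Real.sqrt (1 + k ^ 2)

/-- The Fourier transform on `ℝ³`. -/
def ft (g : V3 → ℂ) (k : V3) : ℂ :=
  (((2 * Real.pi) ^ (-(3 : ℝ) / 2) : ℝ) : ℂ) *
    ∫ x : V3, Complex.exp (-(Complex.I) * (⟪k, x⟫ : ℂ)) * g x

/-- The inverse Fourier transform on `ℝ³`. -/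
def ift (g : V3 → ℂ) (x : V3) : ℂ :=
  (((2 * Real.pi) ^ (-(3 : ℝ) / 2) : ℝ) : ℂ) *
    ∫ k : V3, Complex.exp (Complex.I * (⟪k, x⟫ : ℂ)) * g k

/-- The map `K_t` on the Fourier side, applied to the Fourier transforms `f̃, h̃`
of the Cauchy data:
`K_t(f,h)(k) = (πi/(4t³))·[t·f̃(k)·conj(v′(t,|k|)) − R·h̃(k)·conj(v(t,|k|))]`. -/
def ktAux (m R t : ℝ) (ftil htil : V3 → ℂ) (k : V3) : ℂ :=
  ((Real.pi : ℂ) * Complex.I / (4 * (t : ℂ) ^ 3)) *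
    ((t : ℂ) * ftil k * (starRingEnd ℂ) (modeV' m R t ‖k‖) -
      (R : ℂ) * htil k * (starRingEnd ℂ) (modeV m R t ‖k‖))

/-- `K_t` applied to real Cauchy data `(f,h)`. -/
def ktFun (m R t : ℝ) (f h : V3 → ℝ) : V3 → ℂ :=
  ktAux m R t (ft fun x => (f x : ℂ)) (ft fun x => (h x : ℂ))

/-- The Fourier transform of the first component of the pair `L_tψ`:
`f̃_t(k) = v(t,|k|)·ψ(k) + conj(v(t,|k|))·conj(ψ(−k))`. -/
def ltF (m R t : ℝ) (ψ : V3 → ℂ) (k : V3) : ℂ :=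
  modeV m R t ‖k‖ * ψ k + (starRingEnd ℂ) (modeV m R t ‖k‖) * (starRingEnd ℂ) (ψ (-k))

/-- The Fourier transform of the second component of the pair `L_tψ`:
`h̃_t(k) = (t/R)·[v′(t,|k|)·ψ(k) + conj(v′(t,|k|))·conj(ψ(−k))]`. -/
def ltH (m R t : ℝ) (ψ : V3 → ℂ) (k : V3) : ℂ :=
  ((t / R : ℝ) : ℂ) *
    (modeV' m R t ‖k‖ * ψ k + (starRingEnd ℂ) (modeV' m R t ‖k‖) * (starRingEnd ℂ) (ψ (-k)))

/-- The solution `u(t,x⃗)` built from the coefficient function `ψ`: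
`u(t,x⃗) = (2π)^{−3/2}·∫ e^{ik⃗·x⃗}·[v(t,|k⃗|)·ψ(k⃗) + conj(v(t,|k⃗|))·conj(ψ(−k⃗))] dk⃗`. -/
def uSol (m R : ℝ) (ψ : V3 → ℂ) (t : ℝ) (x : V3) : ℂ :=
  (((2 * Real.pi) ^ (-(3 : ℝ) / 2) : ℝ) : ℂ) *
    ∫ k : V3, Complex.exp (Complex.I * (⟪k, x⟫ : ℂ)) *
      (modeV m R t ‖k‖ * ψ k + (starRingEnd ℂ) (modeV m R t ‖k‖) * (starRingEnd ℂ) (ψ (-k)))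

/-- The spatial Laplacian, as the sum of the second partial derivatives along
the coordinate directions. -/
def lap3 (w : V3 → ℂ) (x : V3) : ℂ :=
  ∑ i : Fin 3, iteratedDeriv 2 (fun s : ℝ => w (x + s • EuclideanSpace.single i (1 : ℝ))) 0

/-- The square of the Sobolev-type norm `‖(f,h)‖_{1/2}`, expressed in terms of the
Fourier transforms `f̃, h̃` of the data:
`‖(f,h)‖_{1/2}² = ∫ ω(|k⃗|)·|f̃(k⃗)|² dk⃗ + ∫ ω(|k⃗|)⁻¹·|h̃(k⃗)|² dk⃗`. -/
def halfNormSq (ftil htil : V3 → ℂ) : ℝ :=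
  (∫ k : V3, omegaK ‖k‖ * ‖ftil k‖ ^ 2) + ∫ k : V3, (omegaK ‖k‖)⁻¹ * ‖htil k‖ ^ 2

/-- The Sobolev-type norm `‖(f,h)‖_{1/2}` (arguments are the Fourier transforms). -/
def halfNorm (ftil htil : V3 → ℂ) : ℝ := Real.sqrt (halfNormSq ftil htil)

/-- The `L²(ℝ³)` norm. -/
def l2Norm (g : V3 → ℂ) : ℝ := Real.sqrt (∫ k : V3, ‖g k‖ ^ 2)

/-- The transformed potential operator `V̂` with (Fourier-transformed) potential `W`:
`(V̂ψ)(k⃗) = −(2π)^{3/2}·R·(πi/4)·conj(v(1,|k⃗|))·(W ∗ g_ψ)(k⃗)` where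
`g_ψ(k⃗) = v(1,|k⃗|)·ψ(k⃗) + conj(v(1,|k⃗|))·conj(ψ(−k⃗))`. -/
def vHatOp (m R : ℝ) (W : V3 → ℂ) (ψ : V3 → ℂ) (k : V3) : ℂ :=
  ((-((2 * Real.pi) ^ ((3 : ℝ) / 2)) * R : ℝ) : ℂ) * ((Real.pi : ℂ) * Complex.I / 4) *
    (starRingEnd ℂ) (modeV m R 1 ‖k‖) * ∫ y : V3, W y * ltF m R 1 ψ (k - y)

/-- The free transformed evolution `Û₀(a,b) = K₁ ∘ L_a ∘ K_b ∘ L₁` on `L²(ℝ³)`. -/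
def u0Hat (m R a b : ℝ) (ψ : V3 → ℂ) : V3 → ℂ :=
  ktAux m R 1 (ltF m R a (ktAux m R b (ltF m R 1 ψ) (ltH m R 1 ψ)))
    (ltH m R a (ktAux m R b (ltF m R 1 ψ) (ltH m R 1 ψ)))

/-- The inner chain `V̂(s)·V̂(s₂)···V̂(s_{j+1})·Û₀(s_{j+1},1)ψ` of the `n`-th Dyson term,
with the nested integrals `∫₁^{s}···` built in; `W s` is the spatial Fourier transform
of the potential at time `s`. -/
def dysonM (m R : ℝ) (W : ℝ → V3 → ℂ) : ℕ → ℝ → (V3 → ℂ) → V3 → ℂ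
  | 0, s, ψ => vHatOp m R (W s) (u0Hat m R s 1 ψ)
  | j + 1, s, ψ => vHatOp m R (W s) fun k => ∫ r in Set.Ioc (1 : ℝ) s, dysonM m R W j r ψ k

/-- The `n`-th Dyson term
`∫₁^t∫₁^{s₁}···∫₁^{s_{n−1}} Û₀(t,s₁)·V̂(s₁)···V̂(s_n)·Û₀(s_n,1)ψ ds_n···ds₁` (for `n ≥ 1`). -/
def dysonT (m R : ℝ) (W : ℝ → V3 → ℂ) (n : ℕ) (t : ℝ) (ψ : V3 → ℂ) : V3 → ℂ := fun k =>
  ∫ s in Set.Ioc (1 : ℝ) t, u0Hat m R t s (dysonM m R W (n - 1) s ψ) k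

/-- coefficient of the power series -/
def mfC (k : ℝ) (α : ℂ) (n : ℕ) : ℂ :=
  (-1 : ℂ) ^ n / ((n.factorial : ℂ) * Complex.Gamma (α + (n : ℂ) + 1)) *
    Complex.exp ((α + 2 * (n : ℂ)) * (Real.log (k / 2) : ℂ))

def mfE (α : ℂ) (n : ℕ) : ℂ := 3 / 2 + α + 2 * (n : ℂ)

def mfF (k : ℝ) (α : ℂ) (t : ℝ) : ℂ :=
  ∑' n : ℕ, mfC k α n * Complex.exp (mfE α n * (Real.log t : ℂ))

def mfF1 (k : ℝ) (α : ℂ) (t : ℝ) : ℂ :=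
  ∑' n : ℕ, mfC k α n * (mfE α n * Complex.exp ((mfE α n - 1) * (Real.log t : ℂ)))

def mfF2 (k : ℝ) (α : ℂ) (t : ℝ) : ℂ :=
  ∑' n : ℕ, mfC k α n *
    (mfE α n * ((mfE α n - 1) * Complex.exp ((mfE α n - 1 - 1) * (Real.log t : ℂ))))

def mfLam (a b : ℝ) : ℝ := max |Real.log a| |Real.log b|

def mfBound (k : ℝ) (α : ℂ) (a b : ℝ) (CM : ℝ) (n : ℕ) : ℝ :=
  (CM * Real.exp ((‖α‖ + 6) * mfLam a b) / ‖(Complex.Gamma (α + 1))‖) *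
    ((k / 2) ^ 2 * Real.exp (2 * mfLam a b)) ^ n * ((n : ℝ) + 1) ^ 2 / n.factorial

lemma mf_ne {α : ℂ} (him : α.im ≠ 0) (n : ℕ) : α + (n : ℂ) + 1 ≠ 0 := by
  intro h
  apply him
  have := congrArg Complex.im h
  simpa using this

lemma mf_gamma_ne {α : ℂ} (him : α.im ≠ 0) (n : ℕ) :
    Complex.Gamma (α + (n : ℂ) + 1) ≠ 0 := by
  apply Complex.Gamma_ne_zero
  intro m h
  apply him
  have := congrArg Complex.im h
  simpa using this

lemma mf_gamma_one_pos {α : ℂ} (him : α.im ≠ 0) :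
    0 < ‖(Complex.Gamma (α + 1))‖ := by
  have h := mf_gamma_ne him 0
  simp only [Nat.cast_zero, add_zero] at h
  exact norm_pos_iff.2 h

lemma mf_gamma_lb {α : ℂ} (hre : α.re = 0) (him : α.im ≠ 0) (n : ℕ) :
    (n.factorial : ℝ) * ‖(Complex.Gamma (α + 1))‖ ≤
      ‖(Complex.Gamma (α + (n : ℂ) + 1))‖ := by
  induction n with
  | zero => simp
  | succ n ih =>
    have hcast : α + ((n : ℕ) + 1 : ℕ) + 1 = (α + (n : ℂ) + 1) + 1 := by push_cast; ring
    rw [hcast, Complex.Gamma_add_one _ (mf_ne him n), norm_mul]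
    have hre' : (α + (n : ℂ) + 1).re = (n : ℝ) + 1 := by simp [hre]
    have h1 : ((n : ℝ) + 1) ≤ ‖(α + (n : ℂ) + 1)‖ := by
      calc ((n : ℝ) + 1) = |(α + (n : ℂ) + 1).re| := by
            rw [hre', _root_.abs_of_nonneg (by positivity)]
        _ ≤ ‖(α + (n : ℂ) + 1)‖ := Complex.abs_re_le_norm _
    calc ((n + 1).factorial : ℝ) * ‖(Complex.Gamma (α + 1))‖
        = ((n : ℝ) + 1) * ((n.factorial : ℝ) * ‖(Complex.Gamma (α + 1))‖) := by
          push_cast [Nat.factorial_succ]; ring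
      _ ≤ ‖(α + (n : ℂ) + 1)‖ * ‖(Complex.Gamma (α + (n : ℂ) + 1))‖ := by
          apply mul_le_mul h1 ih (by positivity) (by positivity)

lemma mf_normC {k : ℝ} (hk : 0 < k) {α : ℂ} (hre : α.re = 0) (him : α.im ≠ 0) (n : ℕ) :
    ‖mfC k α n‖ ≤ ((k / 2) ^ 2) ^ n / ((n.factorial : ℝ) * ‖(Complex.Gamma (α + 1))‖) := by
  have hk2 : (0 : ℝ) < k / 2 := by linarith
  have hfac : (1 : ℝ) ≤ (n.factorial : ℝ) := by exact_mod_cast n.factorial_pos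
  have hG1 := mf_gamma_one_pos him
  have hnorm : ‖mfC k α n‖ =
      ((k / 2) ^ 2) ^ n / ((n.factorial : ℝ) * ‖(Complex.Gamma (α + (n : ℂ) + 1))‖) := by
    rw [mfC, norm_mul, norm_div, norm_pow, norm_neg, norm_one, one_pow]
    rw [Complex.norm_exp]
    have hrecalc : ((α + 2 * (n : ℂ)) * (Real.log (k / 2) : ℂ)).re = 2 * n * Real.log (k / 2) := by
      simp [Complex.mul_re, hre]
    rw [hrecalc]
    have : Real.exp (2 * n * Real.log (k / 2)) = ((k / 2) ^ 2) ^ n := by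
      rw [show (2 : ℝ) * n * Real.log (k / 2) = (2 * n : ℕ) * Real.log (k / 2) by push_cast; ring,
        Real.exp_nat_mul, Real.exp_log hk2, ← pow_mul, mul_comm 2 n, pow_mul]
    rw [this, norm_mul, Complex.norm_natCast]
    ring
  rw [hnorm]
  apply div_le_div_of_nonneg_left (by positivity) (by positivity)
  calc (n.factorial : ℝ) * ‖(Complex.Gamma (α + 1))‖
      ≤ (n.factorial : ℝ) * ((n.factorial : ℝ) * ‖(Complex.Gamma (α + 1))‖) := by
        nlinarith [mul_nonneg (mul_nonneg (sub_nonneg.2 hfac)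
          (Nat.cast_nonneg n.factorial : (0:ℝ) ≤ _)) hG1.le]
    _ ≤ (n.factorial : ℝ) * ‖(Complex.Gamma (α + (n : ℂ) + 1))‖ := by
        exact mul_le_mul_of_nonneg_left (mf_gamma_lb hre him n) (by positivity)

lemma mf_hasDerivAt_cexp_log (b : ℂ) {t : ℝ} (ht : 0 < t) :
    HasDerivAt (fun s : ℝ => Complex.exp (b * (Real.log s : ℂ)))
      (b * Complex.exp ((b - 1) * (Real.log t : ℂ))) t := by
  have h1 : HasDerivAt (fun s : ℝ => b * (Real.log s : ℂ)) (b * (t⁻¹ : ℝ)) t :=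
    ((Real.hasDerivAt_log ht.ne').ofReal_comp).const_mul b
  have h2 := h1.cexp
  have hexp : Complex.exp ((Real.log t : ℂ)) = (t : ℂ) := by
    rw [← Complex.ofReal_exp, Real.exp_log ht]
  have ht0 : (t : ℂ) ≠ 0 := by exact_mod_cast ht.ne'
  convert h2 using 1
  rw [sub_mul, one_mul, Complex.exp_sub, hexp]
  push_cast
  field_simp

lemma mf_exp_norm_le {a b : ℝ} (ha : 0 < a) (q : ℂ) {s : ℝ} (hs : s ∈ Set.Ioo a b) :
    ‖Complex.exp (q * (Real.log s : ℂ))‖ ≤ Real.exp (‖q‖ * mfLam a b) := by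
  rw [Complex.norm_exp]
  apply Real.exp_le_exp.2
  have hre : (q * (Real.log s : ℂ)).re = q.re * Real.log s := by simp
  rw [hre]
  have hlogs : |Real.log s| ≤ mfLam a b := by
    rw [abs_le]
    constructor
    · calc -(mfLam a b) ≤ -|Real.log a| := by simp [mfLam]
        _ ≤ Real.log a := neg_abs_le _
        _ ≤ Real.log s := Real.log_le_log ha hs.1.le
    · calc Real.log s ≤ Real.log b := Real.log_le_log (ha.trans hs.1) hs.2.le
        _ ≤ |Real.log b| := le_abs_self _
        _ ≤ mfLam a b := le_max_right _ _
  calc q.re * Real.log s ≤ |q.re * Real.log s| := le_abs_self _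
    _ = |q.re| * |Real.log s| := abs_mul _ _
    _ ≤ ‖q‖ * mfLam a b := by
        apply mul_le_mul (Complex.abs_re_le_norm q) hlogs (abs_nonneg _) (norm_nonneg q)

lemma mf_sq_le (n : ℕ) : ((n : ℝ) + 1) ^ 2 ≤ 9 * 2 ^ n := by
  induction n with
  | zero => norm_num
  | succ n ih =>
    have h1 : (1 : ℝ) ≤ 2 ^ n := one_le_pow₀ (by norm_num : (1:ℝ) ≤ 2)
    push_cast [pow_succ]
    push_cast at ih
    nlinarith

lemma mf_L1 (C r : ℝ) : Summable (fun n : ℕ => C * r ^ n * ((n : ℝ) + 1) ^ 2 / n.factorial) := by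
  apply Summable.of_norm_bounded (g := fun n : ℕ => 9 * |C| * ((2 * |r|) ^ n / n.factorial))
  · exact (Real.summable_pow_div_factorial (2 * |r|)).mul_left _
  · intro n
    have hfac : (0 : ℝ) < n.factorial := by exact_mod_cast n.factorial_pos
    have h1 : ‖C * r ^ n * ((n : ℝ) + 1) ^ 2 / n.factorial‖ =
        |C| * |r| ^ n * ((n : ℝ) + 1) ^ 2 / n.factorial := by
      rw [Real.norm_eq_abs, abs_div, abs_mul, abs_mul, _root_.abs_pow, _root_.abs_pow,
        _root_.abs_of_nonneg (by positivity : (0:ℝ) ≤ (n : ℝ) + 1), _root_.abs_of_pos hfac]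
    have key : |C| * |r| ^ n * ((n : ℝ) + 1) ^ 2 ≤ 9 * |C| * (2 * |r|) ^ n := by
      rw [mul_pow]
      nlinarith [mul_le_mul_of_nonneg_left (mf_sq_le n)
        (mul_nonneg (abs_nonneg C) (pow_nonneg (abs_nonneg r) n))]
    rw [h1, ← mul_div_assoc]
    gcongr

lemma mf_summable_bound (k : ℝ) (α : ℂ) (a b CM : ℝ) : Summable (mfBound k α a b CM) := by
  unfold mfBound
  exact mf_L1 _ _
lemma mf_site_bound {k : ℝ} (hk : 0 < k) {α : ℂ} (hre : α.re = 0) (him : α.im ≠ 0)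
    {a b : ℝ} (ha : 0 < a) (n : ℕ) (M q : ℂ) (CM : ℝ)
    (hM : ‖M‖ ≤ CM * ((n : ℝ) + 1) ^ 2)
    (hq : ‖q‖ ≤ ‖α‖ + 6 + 2 * n) {s : ℝ} (hs : s ∈ Set.Ioo a b) :
    ‖mfC k α n * M * Complex.exp (q * (Real.log s : ℂ))‖ ≤ mfBound k α a b CM n := by
  have hΛ : 0 ≤ mfLam a b := le_trans (abs_nonneg _) (le_max_left _ _)
  have hCM : 0 ≤ CM := by
    have := (norm_nonneg M).trans hM
    nlinarith [sq_nonneg ((n : ℝ) + 1), (by positivity : (0:ℝ) < ((n : ℝ) + 1) ^ 2)]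
  have hE : ‖Complex.exp (q * (Real.log s : ℂ))‖ ≤
      Real.exp ((‖α‖ + 6) * mfLam a b) * Real.exp (2 * mfLam a b) ^ n := by
    calc ‖Complex.exp (q * (Real.log s : ℂ))‖ ≤ Real.exp (‖q‖ * mfLam a b) :=
          mf_exp_norm_le ha q hs
      _ ≤ Real.exp ((‖α‖ + 6 + 2 * n) * mfLam a b) := by
          apply Real.exp_le_exp.2
          exact mul_le_mul_of_nonneg_right hq hΛ
      _ = Real.exp ((‖α‖ + 6) * mfLam a b) * Real.exp (2 * mfLam a b) ^ n := by
          rw [← Real.exp_nat_mul, ← Real.exp_add]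
          ring_nf
  calc ‖mfC k α n * M * Complex.exp (q * (Real.log s : ℂ))‖
      = ‖mfC k α n‖ * ‖M‖ * ‖Complex.exp (q * (Real.log s : ℂ))‖ := by
        rw [norm_mul, norm_mul]
    _ ≤ (((k / 2) ^ 2) ^ n / ((n.factorial : ℝ) * ‖(Complex.Gamma (α + 1))‖)) *
          (CM * ((n : ℝ) + 1) ^ 2) *
          (Real.exp ((‖α‖ + 6) * mfLam a b) * Real.exp (2 * mfLam a b) ^ n) := by
        apply mul_le_mul
        · exact mul_le_mul (mf_normC hk hre him n) hM (norm_nonneg M) (by positivity)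
        · exact hE
        · exact norm_nonneg _
        · positivity
    _ = mfBound k α a b CM n := by
        rw [mfBound, mul_pow]
        ring

lemma mf_summable_site {k : ℝ} (hk : 0 < k) {α : ℂ} (hre : α.re = 0) (him : α.im ≠ 0)
    {t : ℝ} (ht : 0 < t) (M q : ℕ → ℂ) (CM : ℝ)
    (hM : ∀ n, ‖(M n)‖ ≤ CM * ((n : ℝ) + 1) ^ 2)
    (hq : ∀ n, ‖(q n)‖ ≤ ‖α‖ + 6 + 2 * n) :
    Summable (fun n : ℕ => mfC k α n * M n * Complex.exp (q n * (Real.log t : ℂ))) := by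
  apply Summable.of_norm_bounded (g := mfBound k α (t / 2) (t + 1) CM)
    (mf_summable_bound k α (t / 2) (t + 1) CM)
  intro n
  exact mf_site_bound hk hre him (half_pos ht) n (M n) (q n) CM (hM n) (hq n)
    ⟨half_lt_self ht, lt_add_one t⟩

lemma mf_absE (α : ℂ) (n : ℕ) : ‖(mfE α n)‖ ≤ ‖α‖ + 2 * n + 3 / 2 := by
  rw [mfE]
  calc ‖(3 / 2 + α + 2 * (n : ℂ))‖ ≤ ‖(3 / 2 + α)‖ + ‖(2 * (n : ℂ))‖ :=
        norm_add_le _ _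
    _ ≤ ‖(3 / 2 : ℂ)‖ + ‖α‖ + ‖(2 * (n : ℂ))‖ := by
        have := norm_add_le (3 / 2 : ℂ) α
        linarith
    _ ≤ ‖α‖ + 2 * n + 3 / 2 := by
        have h1 : ‖(3 / 2 : ℂ)‖ = 3 / 2 := by
          rw [show (3 / 2 : ℂ) = ((3 / 2 : ℝ) : ℂ) by norm_num, Complex.norm_real, Real.norm_eq_abs]
          norm_num
        have h2 : ‖(2 * (n : ℂ))‖ = 2 * n := by
          rw [norm_mul, Complex.norm_natCast, Complex.norm_two]
        rw [h1, h2]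
        ring_nf
        linarith

lemma mf_hasDerivAt_F {k : ℝ} (hk : 0 < k) {α : ℂ} (hre : α.re = 0) (him : α.im ≠ 0)
    {t : ℝ} (ht : 0 < t) : HasDerivAt (mfF k α) (mfF1 k α t) t := by
  have hmem : t ∈ Set.Ioo (t / 2) (t + 1) := ⟨half_lt_self ht, lt_add_one t⟩
  apply hasDerivAt_tsum_of_isPreconnected
    (mf_summable_bound k α (t / 2) (t + 1) (‖α‖ + 4)) isOpen_Ioo
    (convex_Ioo _ _).isPreconnected
    (g' := fun n y => mfC k α n * (mfE α n * Complex.exp ((mfE α n - 1) * (Real.log y : ℂ))))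
    ?_ ?_ hmem ?_ hmem
  · intro n y hy
    exact (mf_hasDerivAt_cexp_log (mfE α n) ((half_pos ht).trans hy.1)).const_mul (mfC k α n)
  · intro n y hy
    have hb := mf_site_bound hk hre him (half_pos ht) n (mfE α n) (mfE α n - 1)
      (‖α‖ + 4)
      (by
        have := mf_absE α n
        nlinarith [norm_nonneg α, (Nat.cast_nonneg n : (0:ℝ) ≤ (n:ℝ)), sq_nonneg ((n:ℝ)),
          mul_nonneg (norm_nonneg α) (Nat.cast_nonneg n : (0:ℝ) ≤ (n:ℝ)),
          mul_nonneg (norm_nonneg α) (sq_nonneg ((n:ℝ)))])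
      (by
        have h1 := norm_sub_le (mfE α n) 1
        have h2 := mf_absE α n
        have h3 : ‖(1 : ℂ)‖ = 1 := norm_one
        calc ‖(mfE α n - 1)‖ ≤ ‖(mfE α n)‖ + ‖(1 : ℂ)‖ := h1
          _ ≤ ‖α‖ + 6 + 2 * n := by rw [h3]; linarith)
      hy
    calc ‖mfC k α n * (mfE α n * Complex.exp ((mfE α n - 1) * (Real.log y : ℂ)))‖
        = ‖mfC k α n * mfE α n * Complex.exp ((mfE α n - 1) * (Real.log y : ℂ))‖ := by
          rw [mul_assoc]
      _ ≤ _ := hb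
  · apply Summable.congr (mf_summable_site hk hre him ht (fun _ => 1) (fun n => mfE α n)
      1 (fun n => by rw [norm_one]; nlinarith [(Nat.cast_nonneg n : (0:ℝ) ≤ (n:ℝ)), sq_nonneg ((n:ℝ))])
      (fun n => by have := mf_absE α n; linarith))
    intro n
    rw [mul_one]
lemma mf_absE_le (α : ℂ) (n : ℕ) :
    ‖(mfE α n)‖ ≤ (‖α‖ + 4) * ((n : ℝ) + 1) := by
  have := mf_absE α n
  nlinarith [norm_nonneg α, (Nat.cast_nonneg n : (0:ℝ) ≤ (n:ℝ)),
    mul_nonneg (norm_nonneg α) (Nat.cast_nonneg n : (0:ℝ) ≤ (n:ℝ))]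

lemma mf_absE_sub_one_le (α : ℂ) (n : ℕ) :
    ‖(mfE α n - 1)‖ ≤ (‖α‖ + 4) * ((n : ℝ) + 1) := by
  have h1 := norm_sub_le (mfE α n) 1
  have h2 := mf_absE α n
  have h3 : ‖(1 : ℂ)‖ = 1 := norm_one
  have h4 : ‖(mfE α n - 1)‖ ≤ ‖α‖ + 2 * n + 5 / 2 := by
    rw [h3] at h1; linarith
  nlinarith [norm_nonneg α, (Nat.cast_nonneg n : (0:ℝ) ≤ (n:ℝ)),
    mul_nonneg (norm_nonneg α) (Nat.cast_nonneg n : (0:ℝ) ≤ (n:ℝ))]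

lemma mf_hasDerivAt_F1 {k : ℝ} (hk : 0 < k) {α : ℂ} (hre : α.re = 0) (him : α.im ≠ 0)
    {t : ℝ} (ht : 0 < t) : HasDerivAt (mfF1 k α) (mfF2 k α t) t := by
  have hmem : t ∈ Set.Ioo (t / 2) (t + 1) := ⟨half_lt_self ht, lt_add_one t⟩
  apply hasDerivAt_tsum_of_isPreconnected
    (mf_summable_bound k α (t / 2) (t + 1) ((‖α‖ + 4) ^ 2)) isOpen_Ioo
    (convex_Ioo _ _).isPreconnected
    (g' := fun n y => mfC k α n *
      (mfE α n * ((mfE α n - 1) * Complex.exp ((mfE α n - 1 - 1) * (Real.log y : ℂ)))))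
    ?_ ?_ hmem ?_ hmem
  · intro n y hy
    exact (((mf_hasDerivAt_cexp_log (mfE α n - 1) ((half_pos ht).trans hy.1)).const_mul
      (mfE α n)).const_mul (mfC k α n))
  · intro n y hy
    have hb := mf_site_bound hk hre him (half_pos ht) n (mfE α n * (mfE α n - 1))
      (mfE α n - 1 - 1) ((‖α‖ + 4) ^ 2)
      (by
        rw [norm_mul]
        calc ‖(mfE α n)‖ * ‖(mfE α n - 1)‖
            ≤ ((‖α‖ + 4) * ((n : ℝ) + 1)) * ((‖α‖ + 4) * ((n : ℝ) + 1)) := by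
              apply mul_le_mul (mf_absE_le α n) (mf_absE_sub_one_le α n)
                (norm_nonneg _) (by positivity)
          _ = (‖α‖ + 4) ^ 2 * ((n : ℝ) + 1) ^ 2 := by ring)
      (by
        have h1 := norm_sub_le (mfE α n - 1) 1
        have h2 := mf_absE_sub_one_le α n
        have h2' := mf_absE α n
        have h3 : ‖(1 : ℂ)‖ = 1 := norm_one
        have h5 := norm_sub_le (mfE α n) 1
        rw [h3] at h1 h5
        calc ‖(mfE α n - 1 - 1)‖ ≤ ‖(mfE α n - 1)‖ + 1 := h1
          _ ≤ ‖α‖ + 6 + 2 * n := by linarith)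
      hy
    calc ‖mfC k α n * (mfE α n * ((mfE α n - 1) *
            Complex.exp ((mfE α n - 1 - 1) * (Real.log y : ℂ))))‖
        = ‖mfC k α n * (mfE α n * (mfE α n - 1)) *
            Complex.exp ((mfE α n - 1 - 1) * (Real.log y : ℂ))‖ := by
          ring_nf
      _ ≤ _ := hb
  · apply Summable.congr (mf_summable_site hk hre him ht (fun n => mfE α n)
      (fun n => mfE α n - 1) (‖α‖ + 4)
      (fun n => by
        calc ‖(mfE α n)‖ ≤ (‖α‖ + 4) * ((n : ℝ) + 1) := mf_absE_le α n
          _ ≤ (‖α‖ + 4) * ((n : ℝ) + 1) ^ 2 := by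
              nlinarith [norm_nonneg α, (Nat.cast_nonneg n : (0:ℝ) ≤ (n:ℝ)),
                mul_nonneg (norm_nonneg α) (Nat.cast_nonneg n : (0:ℝ) ≤ (n:ℝ)),
                mul_nonneg (norm_nonneg α) (sq_nonneg ((n:ℝ))), sq_nonneg ((n:ℝ))])
      (fun n => by
        have h1 := norm_sub_le (mfE α n) 1
        have h2 := mf_absE α n
        rw [norm_one] at h1
        linarith))
    intro n
    rw [mul_assoc]

lemma mf_eq_besselJ {k : ℝ} (hk : 0 < k) (α : ℂ) {t : ℝ} (ht : 0 < t) :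
    ((t ^ ((3 : ℝ) / 2) : ℝ) : ℂ) * besselJ α (k * t) = mfF k α t := by
  rw [besselJ, mfF, ← tsum_mul_left]
  apply tsum_congr
  intro n
  have hlog : Real.log (k * t / 2) = Real.log (k / 2) + Real.log t := by
    rw [show k * t / 2 = (k / 2) * t by ring, Real.log_mul (by positivity) ht.ne']
  have hT : ((t ^ ((3 : ℝ) / 2) : ℝ) : ℂ) = Complex.exp ((3 / 2 : ℂ) * (Real.log t : ℂ)) := by
    rw [Real.rpow_def_of_pos ht, Complex.ofReal_exp]
    congr 1
    push_cast
    ring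
  rw [hlog, hT, mfC, mfE]
  push_cast
  rw [mul_add (α + 2 * (n : ℂ)), Complex.exp_add,
    show ((3:ℂ) / 2 + α + 2 * (n : ℂ)) * (Real.log t : ℂ) =
      (3 / 2 : ℂ) * (Real.log t : ℂ) + (α + 2 * (n : ℂ)) * (Real.log t : ℂ) by ring,
    Complex.exp_add]
  ring
lemma mf_expL {t : ℝ} (ht : 0 < t) : Complex.exp ((Real.log t : ℂ)) = (t : ℂ) := by
  rw [← Complex.ofReal_exp, Real.exp_log ht]

lemma mf_rec {k : ℝ} (hk : 0 < k) {α : ℂ} (him : α.im ≠ 0) (n : ℕ) :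
    mfC k α (n + 1) * (4 * ((n : ℂ) + 1) * (((n : ℂ) + 1) + α)) = -(mfC k α n * (k : ℂ) ^ 2) := by
  have hg : Complex.Gamma (α + ((n : ℕ) + 1 : ℕ) + 1) =
      (α + (n : ℂ) + 1) * Complex.Gamma (α + (n : ℂ) + 1) := by
    rw [show α + ((n : ℕ) + 1 : ℕ) + 1 = (α + (n : ℂ) + 1) + 1 by push_cast; ring,
      Complex.Gamma_add_one _ (mf_ne him n)]
  have hfac : (((n + 1).factorial : ℕ) : ℂ) = ((n : ℂ) + 1) * (n.factorial : ℂ) := by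
    push_cast [Nat.factorial_succ]
    ring
  have hexpK : Complex.exp ((α + 2 * (((n : ℕ) + 1 : ℕ) : ℂ)) * (Real.log (k / 2) : ℂ)) =
      Complex.exp ((α + 2 * (n : ℂ)) * (Real.log (k / 2) : ℂ)) * ((k : ℂ) / 2) ^ 2 := by
    rw [show (α + 2 * (((n : ℕ) + 1 : ℕ) : ℂ)) * (Real.log (k / 2) : ℂ) =
        (α + 2 * (n : ℂ)) * (Real.log (k / 2) : ℂ) +
          ((Real.log (k / 2) : ℂ) + (Real.log (k / 2) : ℂ)) by push_cast; ring,
      Complex.exp_add, Complex.exp_add, mf_expL (by positivity : (0:ℝ) < k / 2)]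
    push_cast
    ring
  rw [mfC, mfC, hg, hfac, hexpK]
  have h1 : ((n : ℂ) + 1) ≠ 0 := Nat.cast_add_one_ne_zero n
  have h2 : (α + (n : ℂ) + 1) ≠ 0 := mf_ne him n
  have h3 : Complex.Gamma (α + (n : ℂ) + 1) ≠ 0 := mf_gamma_ne him n
  have h4 : ((n.factorial : ℕ) : ℂ) ≠ 0 := Nat.cast_ne_zero.2 n.factorial_ne_zero
  rw [pow_succ]
  field_simp
  ring

lemma mf_ode {k : ℝ} (hk : 0 < k) {α : ℂ} (hre : α.re = 0) (him : α.im ≠ 0)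
    {c2 : ℂ} (hsq : α ^ 2 = 9 / 4 - c2) {t : ℝ} (ht : 0 < t) :
    (t : ℂ) ^ 2 * mfF2 k α t - 2 * (t : ℂ) * mfF1 k α t +
      ((k : ℂ) ^ 2 * (t : ℂ) ^ 2 + c2) * mfF k α t = 0 := by
  set L : ℂ := (Real.log t : ℂ) with hL
  have hexpL : Complex.exp L = (t : ℂ) := mf_expL ht
  -- summability facts
  have habs4 : ∀ n : ℕ, ‖(4 * (n : ℂ) * ((n : ℂ) + α))‖ ≤
      (4 * (‖α‖ + 1)) * ((n : ℝ) + 1) ^ 2 := by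
    intro n
    rw [norm_mul, norm_mul]
    have h1 : ‖(4 : ℂ)‖ = 4 := by norm_num [show (4:ℂ) = ((4:ℝ):ℂ) by norm_num]
    have h2 : ‖((n : ℂ))‖ = (n : ℝ) := Complex.norm_natCast n
    have h3 : ‖((n : ℂ) + α)‖ ≤ (n : ℝ) + ‖α‖ := by
      calc ‖((n : ℂ) + α)‖ ≤ ‖((n : ℂ))‖ + ‖α‖ :=
            norm_add_le _ _
        _ = (n : ℝ) + ‖α‖ := by rw [h2]
    rw [h1, h2]
    nlinarith [norm_nonneg α, (Nat.cast_nonneg n : (0:ℝ) ≤ (n:ℝ)), sq_nonneg ((n:ℝ)),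
      mul_nonneg (norm_nonneg α) (Nat.cast_nonneg n : (0:ℝ) ≤ (n:ℝ)),
      norm_nonneg ((n : ℂ) + α)]
  have hqE : ∀ n : ℕ, ‖(mfE α n)‖ ≤ ‖α‖ + 6 + 2 * n := fun n => by
    have := mf_absE α n; linarith
  have hqE2 : ∀ n : ℕ, ‖(mfE α n + 2)‖ ≤ ‖α‖ + 6 + 2 * n := fun n => by
    have h1 := norm_add_le (mfE α n) 2
    have h2 := mf_absE α n
    have h3 : ‖(2 : ℂ)‖ = 2 := Complex.norm_two
    rw [h3] at h1
    linarith
  have SA : Summable (fun n : ℕ => mfC k α n * (4 * (n : ℂ) * ((n : ℂ) + α)) *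
      Complex.exp (mfE α n * L)) :=
    mf_summable_site hk hre him ht _ _ _ habs4 hqE
  have SB : Summable (fun n : ℕ => mfC k α n * (k : ℂ) ^ 2 *
      Complex.exp ((mfE α n + 2) * L)) := by
    apply mf_summable_site hk hre him ht (fun _ => (k : ℂ) ^ 2) _ (k ^ 2)
    · intro n
      rw [norm_pow, Complex.norm_real, Real.norm_eq_abs, _root_.abs_of_pos hk]
      nlinarith [(Nat.cast_nonneg n : (0:ℝ) ≤ (n:ℝ)), sq_nonneg k, sq_nonneg ((n:ℝ)),
        mul_nonneg (sq_nonneg k) (Nat.cast_nonneg n : (0:ℝ) ≤ (n:ℝ)),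
        mul_nonneg (sq_nonneg k) (sq_nonneg ((n:ℝ)))]
    · exact hqE2
  have S0 : Summable (fun n : ℕ => mfC k α n * Complex.exp (mfE α n * L)) := by
    apply Summable.congr (mf_summable_site hk hre him ht (fun _ => 1) (fun n => mfE α n) 1
      (fun n => by rw [norm_one]; nlinarith [(Nat.cast_nonneg n : (0:ℝ) ≤ (n:ℝ)), sq_nonneg ((n:ℝ))])
      hqE)
    intro n; rw [mul_one]
  have S1 : Summable (fun n : ℕ => mfC k α n * (mfE α n * Complex.exp ((mfE α n - 1) * L))) := by
    apply Summable.congr (mf_summable_site hk hre him ht (fun n => mfE α n)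
      (fun n => mfE α n - 1) (‖α‖ + 4)
      (fun n => by
        calc ‖(mfE α n)‖ ≤ (‖α‖ + 4) * ((n : ℝ) + 1) := mf_absE_le α n
          _ ≤ (‖α‖ + 4) * ((n : ℝ) + 1) ^ 2 := by
              nlinarith [norm_nonneg α, (Nat.cast_nonneg n : (0:ℝ) ≤ (n:ℝ)),
                mul_nonneg (norm_nonneg α) (Nat.cast_nonneg n : (0:ℝ) ≤ (n:ℝ)),
                mul_nonneg (norm_nonneg α) (sq_nonneg ((n:ℝ))), sq_nonneg ((n:ℝ))])
      (fun n => by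
        have h1 := norm_sub_le (mfE α n) 1
        have h2 := mf_absE α n
        rw [norm_one] at h1
        linarith))
    intro n; rw [mul_assoc]
  have S2 : Summable (fun n : ℕ => mfC k α n *
      (mfE α n * ((mfE α n - 1) * Complex.exp ((mfE α n - 1 - 1) * L)))) := by
    apply Summable.congr (mf_summable_site hk hre him ht (fun n => mfE α n * (mfE α n - 1))
      (fun n => mfE α n - 1 - 1) ((‖α‖ + 4) ^ 2)
      (fun n => by
        rw [norm_mul]
        calc ‖(mfE α n)‖ * ‖(mfE α n - 1)‖
            ≤ ((‖α‖ + 4) * ((n : ℝ) + 1)) * ((‖α‖ + 4) * ((n : ℝ) + 1)) :=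
              mul_le_mul (mf_absE_le α n) (mf_absE_sub_one_le α n)
                (norm_nonneg _) (by positivity)
          _ = (‖α‖ + 4) ^ 2 * ((n : ℝ) + 1) ^ 2 := by ring)
      (fun n => by
        have h1 := norm_sub_le (mfE α n - 1) 1
        have h5 := norm_sub_le (mfE α n) 1
        have h2 := mf_absE α n
        rw [norm_one] at h1 h5
        linarith))
    intro n
    rw [← hL]
    ring_nf
  -- rewrite everything as a single tsum
  rw [mfF, mfF1, mfF2, ← hL, ← tsum_mul_left, ← tsum_mul_left, ← tsum_mul_left,
    ← Summable.tsum_sub (S2.mul_left ((t : ℂ) ^ 2)) (S1.mul_left (2 * (t : ℂ))),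
    ← Summable.tsum_add ((S2.mul_left ((t : ℂ) ^ 2)).sub (S1.mul_left (2 * (t : ℂ))))
      (S0.mul_left ((k : ℂ) ^ 2 * (t : ℂ) ^ 2 + c2))]
  have hterm : ∀ n : ℕ,
      (t : ℂ) ^ 2 * (mfC k α n * (mfE α n * ((mfE α n - 1) *
          Complex.exp ((mfE α n - 1 - 1) * L)))) -
        2 * (t : ℂ) * (mfC k α n * (mfE α n * Complex.exp ((mfE α n - 1) * L))) +
        ((k : ℂ) ^ 2 * (t : ℂ) ^ 2 + c2) * (mfC k α n * Complex.exp (mfE α n * L)) =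
      mfC k α n * (4 * (n : ℂ) * ((n : ℂ) + α)) * Complex.exp (mfE α n * L) +
        mfC k α n * (k : ℂ) ^ 2 * Complex.exp ((mfE α n + 2) * L) := by
    intro n
    have h2 : Complex.exp ((mfE α n - 1 - 1) * L) * ((t : ℂ) * (t : ℂ)) =
        Complex.exp (mfE α n * L) := by
      rw [show mfE α n * L = (mfE α n - 1 - 1) * L + (L + L) by ring, Complex.exp_add,
        Complex.exp_add, hexpL]
    have h1 : Complex.exp ((mfE α n - 1) * L) * (t : ℂ) = Complex.exp (mfE α n * L) := by
      rw [show mfE α n * L = (mfE α n - 1) * L + L by ring, Complex.exp_add, hexpL]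
    have h3 : Complex.exp ((mfE α n + 2) * L) =
        Complex.exp (mfE α n * L) * ((t : ℂ) * (t : ℂ)) := by
      rw [show (mfE α n + 2) * L = mfE α n * L + (L + L) by ring, Complex.exp_add,
        Complex.exp_add, hexpL]
    have hkey : mfE α n * (mfE α n - 1) - 2 * mfE α n + c2 = 4 * (n : ℂ) * ((n : ℂ) + α) := by
      rw [mfE]
      linear_combination hsq
    linear_combination (mfC k α n * mfE α n * (mfE α n - 1)) * h2 +
      (-2 * mfC k α n * mfE α n) * h1 + (-(mfC k α n * (k : ℂ) ^ 2)) * h3 +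
      (mfC k α n * Complex.exp (mfE α n * L)) * hkey
  rw [tsum_congr hterm, Summable.tsum_add SA SB]
  -- shift index in the first sum
  have hshift : ∑' n : ℕ, mfC k α n * (4 * (n : ℂ) * ((n : ℂ) + α)) *
      Complex.exp (mfE α n * L) =
      ∑' n : ℕ, -(mfC k α n * (k : ℂ) ^ 2 * Complex.exp ((mfE α n + 2) * L)) := by
    rw [Summable.tsum_eq_zero_add SA]
    have h0 : mfC k α 0 * (4 * ((0 : ℕ) : ℂ) * (((0 : ℕ) : ℂ) + α)) *
        Complex.exp (mfE α 0 * L) = 0 := by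
      simp
    rw [h0, zero_add]
    apply tsum_congr
    intro n
    have hE : mfE α (n + 1) = mfE α n + 2 := by rw [mfE, mfE]; push_cast; ring
    rw [hE]
    have hr := mf_rec hk him n
    have hcast : ((n + 1 : ℕ) : ℂ) = (n : ℂ) + 1 := by push_cast; ring
    rw [hcast]
    linear_combination Complex.exp ((mfE α n + 2) * L) * hr
  rw [hshift, tsum_neg]
  ring

/-- the mode function solves the radial de Sitter Klein–Gordon ODE
`t²·v'' − 2t·v' + ((kt)² + (mR)²)·v = 0` for all `t, k > 0`. -/
theorem mode_function_solves_radial_ODE (m R : ℝ) (hm : 0 < m) (hR : 0 < R)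
    (hmR : 3 / 2 < m * R) (t k : ℝ) (ht : 0 < t) (hk : 0 < k) :
    (t : ℂ) ^ 2 * deriv (fun s => deriv (fun r => modeV m R r k) s) t -
        2 * (t : ℂ) * deriv (fun s => modeV m R s k) t +
        (((k * t) ^ 2 + (m * R) ^ 2 : ℝ) : ℂ) * modeV m R t k = 0 := by
  have hmR0 : 0 < m * R := by linarith
  have hmu2 : (modeMu m R) ^ 2 = (m * R) ^ 2 - 9 / 4 := Real.sq_sqrt (by nlinarith)
  have hmupos : 0 < modeMu m R := Real.sqrt_pos.2 (by nlinarith)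
  set ν : ℂ := modeNu m R with hν
  have hνre : ν.re = 0 := by simp [hν, modeNu]
  have hνim : ν.im = modeMu m R := by simp [hν, modeNu]
  have hνim' : ν.im ≠ 0 := by rw [hνim]; exact hmupos.ne'
  have hnre : (-ν).re = 0 := by simp [hνre]
  have hnim : (-ν).im ≠ 0 := by simp [hνim]; exact hmupos.ne'
  set c2 : ℂ := ((m : ℂ) * R) ^ 2 with hc2
  have hmuC : ((modeMu m R : ℝ) : ℂ) ^ 2 = c2 - 9 / 4 := by
    rw [hc2]
    have : (((modeMu m R) ^ 2 : ℝ) : ℂ) = (((m * R) ^ 2 - 9 / 4 : ℝ) : ℂ) := by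
      exact_mod_cast congrArg (fun x : ℝ => (x : ℂ)) hmu2
    push_cast at this
    push_cast
    linear_combination this
  have hsqν : ν ^ 2 = 9 / 4 - c2 := by
    have h1 : ν ^ 2 = -(((modeMu m R : ℝ) : ℂ)) ^ 2 := by
      rw [hν, modeNu, mul_pow, Complex.I_sq]
      ring
    rw [h1, hmuC]
    ring
  have hsqν' : (-ν) ^ 2 = 9 / 4 - c2 := by rw [neg_pow]; simpa using hsqν
  -- the constants
  set A : ℂ := (Real.exp (-(modeMu m R * Real.pi / 2)) : ℂ) *
    (Complex.I * Complex.sin (ν * (Real.pi : ℂ)))⁻¹ with hA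
  set B : ℂ := (Real.exp (-(modeMu m R * Real.pi / 2)) : ℂ) *
    Complex.exp (-(Complex.I * (Real.pi : ℂ) * ν)) *
    (Complex.I * Complex.sin (ν * (Real.pi : ℂ)))⁻¹ with hB
  -- modeV agrees with A • mfF k (-ν) - B • mfF k ν on (0, ∞)
  have hmode : ∀ s : ℝ, s ∈ Set.Ioi (0 : ℝ) →
      modeV m R s k = A * mfF k (-ν) s - B * mfF k ν s := by
    intro s hs
    rw [Set.mem_Ioi] at hs
    rw [modeV, hankel1, ← mf_eq_besselJ hk (-ν) hs, ← mf_eq_besselJ hk ν hs, hA, hB, ← hν]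
    simp only [div_eq_mul_inv]
    ring
  have hG1 : ∀ s : ℝ, s ∈ Set.Ioi (0 : ℝ) →
      HasDerivAt (fun r : ℝ => A * mfF k (-ν) r - B * mfF k ν r)
        (A * mfF1 k (-ν) s - B * mfF1 k ν s) s := by
    intro s hs
    rw [Set.mem_Ioi] at hs
    exact ((mf_hasDerivAt_F hk hnre hnim hs).const_mul A).sub
      ((mf_hasDerivAt_F hk hνre hνim' hs).const_mul B)
  have hd : ∀ s : ℝ, s ∈ Set.Ioi (0 : ℝ) →
      HasDerivAt (fun r : ℝ => modeV m R r k) (A * mfF1 k (-ν) s - B * mfF1 k ν s) s := by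
    intro s hs
    apply (hG1 s hs).congr_of_eventuallyEq
    exact Filter.eventuallyEq_of_mem (isOpen_Ioi.mem_nhds hs) hmode
  have hd1 : ∀ s : ℝ, s ∈ Set.Ioi (0 : ℝ) →
      deriv (fun r : ℝ => modeV m R r k) s = A * mfF1 k (-ν) s - B * mfF1 k ν s :=
    fun s hs => (hd s hs).deriv
  have hd2 : deriv (fun s => deriv (fun r => modeV m R r k) s) t =
      A * mfF2 k (-ν) t - B * mfF2 k ν t := by
    have hev : (fun s => deriv (fun r => modeV m R r k) s) =ᶠ[nhds t]
        (fun s => A * mfF1 k (-ν) s - B * mfF1 k ν s) :=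
      Filter.eventuallyEq_of_mem (isOpen_Ioi.mem_nhds (Set.mem_Ioi.2 ht)) hd1
    rw [hev.deriv_eq]
    have hG2 : HasDerivAt (fun s : ℝ => A * mfF1 k (-ν) s - B * mfF1 k ν s)
        (A * mfF2 k (-ν) t - B * mfF2 k ν t) t :=
      ((mf_hasDerivAt_F1 hk hnre hnim ht).const_mul A).sub
        ((mf_hasDerivAt_F1 hk hνre hνim' ht).const_mul B)
    exact hG2.deriv
  rw [hd2, hd1 t (Set.mem_Ioi.2 ht), hmode t (Set.mem_Ioi.2 ht)]
  have o1 := mf_ode hk hnre hnim hsqν' ht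
  have o2 := mf_ode hk hνre hνim' hsqν ht
  push_cast
  linear_combination A * o1 - B * o2
end
end

section
/- For all t > 0 and k > 0, the Wronskian of the mode function and its complex conjugate satisfies v(t,k)·∂(conj v)/∂t(t,k) − conj(v(t,k))·∂v/∂t(t,k) = −(4i/π)·t²; in particular it is independent of k. -/
open Complex MeasureTheory Filter
open scoped RealInnerProductSpace

noncomputable section

namespace WronskAux

def bc (α : ℂ) (n : ℕ) : ℂ := (-1) ^ n / ((n.factorial : ℂ) * Complex.Gamma (α + (n : ℂ) + 1))

def bt (α : ℂ) (k : ℝ) (n : ℕ) (t : ℝ) : ℂ :=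
  bc α n * Complex.exp ((α + 2 * (n : ℂ)) * (Real.log (k * t / 2) : ℂ))

def bt' (α : ℂ) (k : ℝ) (n : ℕ) (t : ℝ) : ℂ :=
  bc α n * (Complex.exp ((α + 2 * (n : ℂ)) * (Real.log (k * t / 2) : ℂ)) *
    ((α + 2 * (n : ℂ)) * (t : ℂ)⁻¹))

lemma gamma_ne_zero_of_im {s : ℂ} (h : s.im ≠ 0) : Complex.Gamma s ≠ 0 := by
  refine Complex.Gamma_ne_zero fun m hm => h ?_
  rw [hm]; simp

lemma arg_ne_zero {α : ℂ} (him : α.im ≠ 0) (x : ℝ) : α + (x : ℂ) ≠ 0 := by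
  intro h
  apply him
  have := congrArg Complex.im h
  simpa using this

lemma gamma_norm_ge {α : ℂ} (hre : α.re = 0) (him : α.im ≠ 0) (n : ℕ) :
    (n.factorial : ℝ) * ‖Complex.Gamma (α + 1)‖ ≤ ‖Complex.Gamma (α + (n : ℂ) + 1)‖ := by
  induction n with
  | zero => simp
  | succ n ih =>
    have h1 : α + ((n : ℂ) + 1) + 1 = (α + (n : ℂ) + 1) + 1 := by ring
    have hne : α + (n : ℂ) + 1 ≠ 0 := by
      have := arg_ne_zero him ((n : ℝ) + 1)
      rwa [show ((((n : ℝ) + 1) : ℝ) : ℂ) = (n : ℂ) + 1 by push_cast; ring, ← add_assoc] at this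
    have h2 : Complex.Gamma (α + ((n : ℕ) + 1 : ℕ) + 1) = (α + (n : ℂ) + 1) * Complex.Gamma (α + (n : ℂ) + 1) := by
      rw [show (α + (((n : ℕ) + 1 : ℕ) : ℂ) + 1) = (α + (n : ℂ) + 1) + 1 by push_cast; ring]
      exact Complex.Gamma_add_one _ hne
    rw [h2, norm_mul]
    have hnorm : ((n : ℝ) + 1) ≤ ‖α + (n : ℂ) + 1‖ := by
      have h3 : (α + (n : ℂ) + 1).re = (n : ℝ) + 1 := by simp [hre]
      calc ((n : ℝ) + 1) = |(α + (n : ℂ) + 1).re| := by rw [h3]; exact (_root_.abs_of_nonneg (by positivity)).symm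
        _ ≤ ‖α + (n : ℂ) + 1‖ := Complex.abs_re_le_norm _
        _ = ‖α + (n : ℂ) + 1‖ := rfl
    calc ((n + 1).factorial : ℝ) * ‖Complex.Gamma (α + 1)‖
        = ((n : ℝ) + 1) * ((n.factorial : ℝ) * ‖Complex.Gamma (α + 1)‖) := by
          rw [Nat.factorial_succ]; push_cast; ring
      _ ≤ ‖α + (n : ℂ) + 1‖ * ‖Complex.Gamma (α + (n : ℂ) + 1)‖ := by
          apply mul_le_mul hnorm ih (by positivity) (norm_nonneg _)

lemma Gpos {α : ℂ} (him : α.im ≠ 0) : 0 < ‖Complex.Gamma (α + 1)‖ := by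
  rw [norm_pos_iff]
  exact gamma_ne_zero_of_im (by simpa using him)

lemma bc_norm_le {α : ℂ} (hre : α.re = 0) (him : α.im ≠ 0) (n : ℕ) :
    ‖bc α n‖ ≤ 1 / (((n.factorial : ℝ))^2 * ‖Complex.Gamma (α + 1)‖) := by
  have hG := Gpos him
  have hfac : (0:ℝ) < (n.factorial : ℝ) := by exact_mod_cast n.factorial_pos
  have h1 : ‖bc α n‖ = 1 / ((n.factorial : ℝ) * ‖Complex.Gamma (α + (n:ℂ) + 1)‖) := by
    rw [bc, norm_div, norm_pow, norm_neg, norm_one, one_pow, norm_mul]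
    norm_num
  rw [h1]
  apply one_div_le_one_div_of_le (by positivity)
  calc ((n.factorial : ℝ))^2 * ‖Complex.Gamma (α + 1)‖
      = (n.factorial : ℝ) * ((n.factorial : ℝ) * ‖Complex.Gamma (α + 1)‖) := by ring
    _ ≤ (n.factorial : ℝ) * ‖Complex.Gamma (α + (n:ℂ) + 1)‖ := by
        exact mul_le_mul_of_nonneg_left (gamma_norm_ge hre him n) hfac.le

lemma exp_term_norm {α : ℂ} (hre : α.re = 0) {k t : ℝ} (hkt : 0 < k * t) (n : ℕ) :
    ‖Complex.exp ((α + 2 * (n : ℂ)) * (Real.log (k * t / 2) : ℂ))‖ = ((k * t / 2)^2)^n := by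
  rw [Complex.norm_exp]
  have hre2 : ((α + 2 * (n : ℂ)) * (Real.log (k * t / 2) : ℂ)).re
      = (2 * (n:ℝ)) * Real.log (k * t / 2) := by
    simp [Complex.mul_re, hre]
  rw [hre2, show (2 * (n:ℝ)) * Real.log (k*t/2) = ((2*n : ℕ):ℝ) * Real.log (k*t/2) by push_cast; ring,
    Real.exp_nat_mul, Real.exp_log (by positivity), pow_mul]

lemma summable_poly_fact (c r : ℝ) (hc : 0 ≤ c) (hr : 0 ≤ r) :
    Summable (fun n : ℕ => (c + 2*(n:ℝ)) * r^n / (n.factorial : ℝ)) := by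
  have h := (Real.summable_pow_div_factorial (2*r)).mul_left (c+2)
  refine h.of_nonneg_of_le (fun n => by positivity) (fun n => ?_)
  have h2 : (c + 2*(n:ℝ)) ≤ (c+2) * 2^n := by
    have hn : ((n:ℝ) + 1) ≤ 2^n := by
      exact_mod_cast Nat.succ_le_of_lt (Nat.lt_two_pow_self (n := n))
    nlinarith [pow_nonneg (by norm_num : (0:ℝ) ≤ 2) n]
  calc (c + 2*(n:ℝ)) * r^n / (n.factorial : ℝ) ≤ ((c+2) * 2^n) * r^n / (n.factorial : ℝ) := by
        gcongr
    _ = (c+2) * ((2*r)^n / (n.factorial : ℝ)) := by rw [mul_pow]; ring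

lemma summable_norm_bt {α : ℂ} (hre : α.re = 0) (him : α.im ≠ 0) {k t : ℝ}
    (hk : 0 < k) (ht : 0 < t) : Summable (fun n => ‖bt α k n t‖) := by
  have hG := Gpos him
  have hkt : 0 < k * t := mul_pos hk ht
  refine Summable.of_nonneg_of_le (fun n => norm_nonneg _) (fun n => ?_)
    ((summable_poly_fact 1 ((k*t/2)^2) (by norm_num) (by positivity)).mul_left
      (1 / ‖Complex.Gamma (α + 1)‖))
  have hfac : (1:ℝ) ≤ (n.factorial:ℝ) := by exact_mod_cast n.factorial_pos
  have h0 : (0:ℝ) ≤ ((k*t/2)^2)^n := by positivity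
  have h1 : ‖bt α k n t‖ ≤ (1 / (((n.factorial:ℝ))^2 * ‖Complex.Gamma (α+1)‖)) * ((k*t/2)^2)^n := by
    rw [bt, norm_mul, exp_term_norm hre hkt]
    exact mul_le_mul_of_nonneg_right (bc_norm_le hre him n) h0
  refine h1.trans ?_
  have h2 : 1/(((n.factorial:ℝ))^2 * ‖Complex.Gamma (α+1)‖)
      ≤ 1/((n.factorial:ℝ) * ‖Complex.Gamma (α+1)‖) :=
    one_div_le_one_div_of_le (by positivity)
      (mul_le_mul_of_nonneg_right (by nlinarith [hfac]) hG.le)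
  calc (1 / (((n.factorial:ℝ))^2 * ‖Complex.Gamma (α+1)‖)) * ((k*t/2)^2)^n
      ≤ (1 / ((n.factorial:ℝ) * ‖Complex.Gamma (α+1)‖)) * ((k*t/2)^2)^n :=
        mul_le_mul_of_nonneg_right h2 h0
    _ ≤ (1 / ((n.factorial:ℝ) * ‖Complex.Gamma (α+1)‖)) * ((1 + 2*(n:ℝ)) * ((k*t/2)^2)^n) := by
        apply mul_le_mul_of_nonneg_left _ (by positivity)
        nlinarith [h0]
    _ = (1 / ‖Complex.Gamma (α+1)‖) * ((1 + 2*(n:ℝ)) * ((k*t/2)^2)^n / (n.factorial:ℝ)) := by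
        field_simp

lemma summable_bt {α : ℂ} (hre : α.re = 0) (him : α.im ≠ 0) {k t : ℝ}
    (hk : 0 < k) (ht : 0 < t) : Summable (fun n => bt α k n t) :=
  (summable_norm_bt hre him hk ht).of_norm

lemma bt'_bound {α : ℂ} (hre : α.re = 0) (him : α.im ≠ 0) {k t : ℝ}
    (hk : 0 < k) (ht : 0 < t) (n : ℕ) (s : ℝ) (hs : s ∈ Set.Ioo (t/2) (t+t)) :
    ‖bt' α k n s‖ ≤ (2/(t * ‖Complex.Gamma (α + 1)‖)) *
      ((‖α‖ + 2*(n:ℝ)) * (((k*t)^2)^n) / (n.factorial:ℝ)) := by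
  have hG := Gpos him
  obtain ⟨hs1, hs2⟩ := hs
  have hspos : 0 < s := lt_trans (by positivity) hs1
  have hfac : (1:ℝ) ≤ (n.factorial:ℝ) := by exact_mod_cast n.factorial_pos
  have hA : ‖α + 2*(n:ℂ)‖ ≤ ‖α‖ + 2*(n:ℝ) := by
    refine (norm_add_le _ _).trans ?_
    rw [norm_mul]
    simp
  have hsinv : s⁻¹ ≤ 2/t := by
    rw [inv_eq_one_div, div_le_div_iff₀ hspos ht]
    linarith
  have hE : ‖Complex.exp ((α + 2 * (n : ℂ)) * (Real.log (k * s / 2) : ℂ))‖ ≤ ((k*t)^2)^n := by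
    rw [exp_term_norm hre (mul_pos hk hspos)]
    refine pow_le_pow_left₀ (by positivity) (pow_le_pow_left₀ (by positivity) ?_ 2) n
    nlinarith
  have e1 : ‖bt' α k n s‖ = ‖bc α n‖ *
      (‖Complex.exp ((α + 2 * (n : ℂ)) * (Real.log (k * s / 2) : ℂ))‖ * (‖α + 2*(n:ℂ)‖ * s⁻¹)) := by
    rw [bt', norm_mul, norm_mul, norm_mul, norm_inv, Complex.norm_real, Real.norm_eq_abs,
      abs_of_pos hspos]
  rw [e1]
  calc ‖bc α n‖ * (‖Complex.exp ((α + 2 * (n : ℂ)) * (Real.log (k * s / 2) : ℂ))‖ * (‖α + 2*(n:ℂ)‖ * s⁻¹))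
      ≤ (1 / (((n.factorial:ℝ))^2 * ‖Complex.Gamma (α+1)‖)) *
        (((k*t)^2)^n * ((‖α‖ + 2*(n:ℝ)) * (2/t))) := by
        gcongr
        exact bc_norm_le hre him n
    _ ≤ (1 / (((n.factorial:ℝ)) * ‖Complex.Gamma (α+1)‖)) *
        (((k*t)^2)^n * ((‖α‖ + 2*(n:ℝ)) * (2/t))) := by
        apply mul_le_mul_of_nonneg_right _ (by positivity)
        exact one_div_le_one_div_of_le (by positivity)
          (mul_le_mul_of_nonneg_right (by nlinarith [hfac]) hG.le)
    _ = (2/(t * ‖Complex.Gamma (α + 1)‖)) *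
        ((‖α‖ + 2*(n:ℝ)) * (((k*t)^2)^n) / (n.factorial:ℝ)) := by
        field_simp

lemma summable_ub {α : ℂ} (him : α.im ≠ 0) {k t : ℝ} (hk : 0 < k) (ht : 0 < t) :
    Summable (fun n : ℕ => (2/(t * ‖Complex.Gamma (α + 1)‖)) *
      ((‖α‖ + 2*(n:ℝ)) * (((k*t)^2)^n) / (n.factorial:ℝ))) := by
  have := (summable_poly_fact ‖α‖ ((k*t)^2) (norm_nonneg _) (by positivity)).mul_left
    (2/(t * ‖Complex.Gamma (α + 1)‖))
  simpa [mul_div_assoc] using this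

lemma besselJ_eq (α : ℂ) (k s : ℝ) : besselJ α (k * s) = ∑' n, bt α k n s := rfl

lemma hasDerivAt_bt (α : ℂ) {k : ℝ} (hk : 0 < k) (n : ℕ) {s : ℝ} (hs : 0 < s) :
    HasDerivAt (fun r => bt α k n r) (bt' α k n s) s := by
  have h1 : HasDerivAt (fun r : ℝ => k * r / 2) (k / 2) s := by
    simpa using ((hasDerivAt_id s).const_mul k).div_const 2
  have h2 : HasDerivAt Real.log (k * s / 2)⁻¹ (k * s / 2) :=
    Real.hasDerivAt_log (by positivity)
  have hL : HasDerivAt (fun r => Real.log (k * r / 2)) s⁻¹ s := by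
    have := h2.comp s h1
    rw [show s⁻¹ = (k * s / 2)⁻¹ * (k / 2) by field_simp]
    exact this
  have hLC : HasDerivAt (fun r => ((Real.log (k * r / 2) : ℝ) : ℂ)) ((s : ℂ)⁻¹) s := by
    have := hL.ofReal_comp
    simpa using this
  have hmul : HasDerivAt (fun r => (α + 2 * (n : ℂ)) * ((Real.log (k * r / 2) : ℝ) : ℂ))
      ((α + 2 * (n : ℂ)) * (s : ℂ)⁻¹) s := hLC.const_mul _
  have hexp := hmul.cexp
  have := hexp.const_mul (bc α n)
  simpa [bt, bt', mul_assoc] using this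

lemma hasDerivAt_besselJ {α : ℂ} (hre : α.re = 0) (him : α.im ≠ 0) {k t : ℝ}
    (hk : 0 < k) (ht : 0 < t) :
    HasDerivAt (fun s => besselJ α (k * s)) (∑' n, bt' α k n t) t := by
  have hopen : IsOpen (Set.Ioo (t/2) (t+t)) := isOpen_Ioo
  have hmem : t ∈ Set.Ioo (t/2) (t+t) := by constructor <;> linarith
  have hpos : ∀ s ∈ Set.Ioo (t/2) (t+t), 0 < s := fun s hs => lt_trans (by linarith) hs.1
  refine hasDerivAt_of_tendstoUniformlyOn
    (f := fun N s => ∑ n ∈ Finset.range N, bt α k n s)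
    (f' := fun N s => ∑ n ∈ Finset.range N, bt' α k n s) hopen
    (tendstoUniformlyOn_tsum_nat (summable_ub him hk ht)
      (fun n s hs => bt'_bound hre him hk ht n s hs)) ?_ ?_ hmem
  · filter_upwards with N s hs
    exact HasDerivAt.fun_sum fun n _ => hasDerivAt_bt α hk n (hpos s hs)
  · intro s hs
    rw [besselJ_eq]
    exact (summable_bt hre him hk (hpos s hs)).hasSum.tendsto_sum_nat

lemma gamma_nat_ne_zero {n : ℕ} (h : n ≠ 0) : Complex.Gamma ((n:ℂ)) ≠ 0 := by
  obtain ⟨m, rfl⟩ := Nat.exists_eq_succ_of_ne_zero h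
  rw [show ((m+1 : ℕ):ℂ) = (m:ℂ) + 1 by push_cast; ring, Complex.Gamma_nat_eq_factorial]
  exact_mod_cast Nat.cast_ne_zero.mpr m.factorial_ne_zero

lemma gamma_natp1_ne_zero (n : ℕ) : Complex.Gamma ((n:ℂ) + 1) ≠ 0 := by
  rw [Complex.Gamma_nat_eq_factorial]
  exact_mod_cast Nat.cast_ne_zero.mpr n.factorial_ne_zero

lemma telescope {α : ℂ} (him : α.im ≠ 0) (N : ℕ) (hN : N ≠ 0) :
    ∑ n ∈ Finset.range (N+1), bc α n * bc (-α) (N-n) * (2*((N:ℂ)-(n:ℂ)) - 2*(n:ℂ) - 2*α) = 0 := by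
  set u : ℕ → ℂ := fun j => (-2) * (-1)^N /
    (Complex.Gamma (j:ℂ) * Complex.Gamma ((N:ℂ)-(j:ℂ)+1) * Complex.Gamma (α+(j:ℂ)) *
      Complex.Gamma ((N:ℂ)-(j:ℂ)+1-α)) with hu
  have hGa : ∀ j : ℕ, Complex.Gamma (α + (j:ℂ)) ≠ 0 := fun j =>
    gamma_ne_zero_of_im (by simpa using him)
  have hGa' : ∀ j : ℕ, Complex.Gamma (α + (j:ℂ) + 1) ≠ 0 := fun j =>
    gamma_ne_zero_of_im (by simpa using him)
  have hGb : ∀ z : ℂ, z.im = -α.im → Complex.Gamma z ≠ 0 := fun z hz =>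
    gamma_ne_zero_of_im (by rw [hz]; simpa using him)
  have key : ∀ n ∈ Finset.range (N+1),
      (N:ℂ) * (bc α n * bc (-α) (N-n) * (2*((N:ℂ)-(n:ℂ)) - 2*(n:ℂ) - 2*α)) = u n - u (n+1) := by
    intro n hn
    rw [Finset.mem_range] at hn
    have hnN : n ≤ N := Nat.lt_succ_iff.mp hn
    have hcast : ((N - n : ℕ) : ℂ) = (N:ℂ) - (n:ℂ) := by
      push_cast [Nat.cast_sub hnN]; ring
    have g3 : Complex.Gamma ((N:ℂ)-(n:ℂ)+1) ≠ 0 := by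
      rw [← hcast]; exact gamma_natp1_ne_zero _
    have g4 : Complex.Gamma ((N:ℂ)-(n:ℂ)+1-α) ≠ 0 := hGb _ (by simp)
    have gn1 : Complex.Gamma ((n:ℂ)+1) ≠ 0 := gamma_natp1_ne_zero n
    have hD : Complex.Gamma ((n:ℂ)+1) * Complex.Gamma (α+(n:ℂ)+1) *
        Complex.Gamma ((N:ℂ)-(n:ℂ)+1) * Complex.Gamma ((N:ℂ)-(n:ℂ)+1-α) ≠ 0 :=
      mul_ne_zero (mul_ne_zero (mul_ne_zero gn1 (hGa' n)) g3) g4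
    have hprod : bc α n * bc (-α) (N-n) = (-1)^N /
        (Complex.Gamma ((n:ℂ)+1) * Complex.Gamma (α+(n:ℂ)+1) *
         Complex.Gamma ((N:ℂ)-(n:ℂ)+1) * Complex.Gamma ((N:ℂ)-(n:ℂ)+1-α)) := by
      rw [bc, bc]
      rw [← Complex.Gamma_nat_eq_factorial n, ← Complex.Gamma_nat_eq_factorial (N-n)]
      rw [show (-α + ((N-n:ℕ):ℂ) + 1) = (N:ℂ)-(n:ℂ)+1-α by rw [hcast]; ring]
      rw [hcast]
      rw [div_mul_div_comm, ← pow_add, Nat.add_sub_cancel' hnN]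
      ring
    have ha : u n = (-2) * (-1)^N * ((n:ℂ) * (α+(n:ℂ))) /
        (Complex.Gamma ((n:ℂ)+1) * Complex.Gamma (α+(n:ℂ)+1) *
         Complex.Gamma ((N:ℂ)-(n:ℂ)+1) * Complex.Gamma ((N:ℂ)-(n:ℂ)+1-α)) := by
      rcases Nat.eq_zero_or_pos n with h0 | hpos
      · subst h0; simp [hu, Complex.Gamma_zero]
      · have hn0 : (n:ℂ) ≠ 0 := Nat.cast_ne_zero.mpr hpos.ne'
        have hαn : α + (n:ℂ) ≠ 0 := fun h => him (by
          have := congrArg Complex.im h; simpa using this)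
        have r1 : Complex.Gamma ((n:ℂ)+1) = (n:ℂ) * Complex.Gamma ((n:ℂ)) :=
          Complex.Gamma_add_one _ hn0
        have r2 : Complex.Gamma (α+(n:ℂ)+1) = (α+(n:ℂ)) * Complex.Gamma (α+(n:ℂ)) :=
          Complex.Gamma_add_one _ hαn
        have g1 : Complex.Gamma ((n:ℂ)) ≠ 0 := gamma_nat_ne_zero hpos.ne'
        have g2 : Complex.Gamma (α+(n:ℂ)) ≠ 0 := hGa n
        rw [hu]
        simp only []
        rw [r1, r2, div_eq_div_iff (by
          exact mul_ne_zero (mul_ne_zero (mul_ne_zero g1 g3) g2) g4) (by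
          refine mul_ne_zero (mul_ne_zero (mul_ne_zero ?_ ?_) g3) g4
          · exact mul_ne_zero hn0 g1
          · exact mul_ne_zero hαn g2)]
        ring
    have hb : u (n+1) = (-2) * (-1)^N * (((N:ℂ)-(n:ℂ)) * ((N:ℂ)-(n:ℂ)-α)) /
        (Complex.Gamma ((n:ℂ)+1) * Complex.Gamma (α+(n:ℂ)+1) *
         Complex.Gamma ((N:ℂ)-(n:ℂ)+1) * Complex.Gamma ((N:ℂ)-(n:ℂ)+1-α)) := by
      rcases eq_or_lt_of_le hnN with h0 | hlt
      · rw [hu]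
        simp only [Nat.cast_add, Nat.cast_one]
        rw [show ((N:ℂ) - ((n:ℂ)+1) + 1) = 0 by rw [h0]; ring,
          show ((N:ℂ)-(n:ℂ)) = 0 by rw [h0]; ring]
        simp [Complex.Gamma_zero]
      · have hNn0 : ((N:ℂ)-(n:ℂ)) ≠ 0 := by
          rw [← hcast]
          exact_mod_cast Nat.cast_ne_zero.mpr (Nat.sub_ne_zero_of_lt hlt)
        have hNnα : ((N:ℂ)-(n:ℂ)-α) ≠ 0 := fun h => him (by
          have := congrArg Complex.im h; simpa using this)
        have r3 : Complex.Gamma ((N:ℂ)-(n:ℂ)+1) = ((N:ℂ)-(n:ℂ)) * Complex.Gamma ((N:ℂ)-(n:ℂ)) :=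
          Complex.Gamma_add_one _ hNn0
        have r4 : Complex.Gamma ((N:ℂ)-(n:ℂ)+1-α)
            = ((N:ℂ)-(n:ℂ)-α) * Complex.Gamma ((N:ℂ)-(n:ℂ)-α) := by
          rw [show (N:ℂ)-(n:ℂ)+1-α = ((N:ℂ)-(n:ℂ)-α)+1 by ring]
          exact Complex.Gamma_add_one _ hNnα
        have g5 : Complex.Gamma ((N:ℂ)-(n:ℂ)) ≠ 0 := by
          rw [← hcast]
          exact gamma_nat_ne_zero (Nat.sub_ne_zero_of_lt hlt)
        have g6 : Complex.Gamma ((N:ℂ)-(n:ℂ)-α) ≠ 0 := hGb _ (by simp)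
        rw [hu]
        simp only [Nat.cast_add, Nat.cast_one]
        rw [show (N:ℂ)-((n:ℂ)+1)+1 = (N:ℂ)-(n:ℂ) by ring,
          show α+((n:ℂ)+1) = α+(n:ℂ)+1 by ring]
        rw [r3, r4, div_eq_div_iff (by
          exact mul_ne_zero (mul_ne_zero (mul_ne_zero gn1 g5) (hGa' n)) g6) (by
          refine mul_ne_zero (mul_ne_zero (mul_ne_zero gn1 (hGa' n)) ?_) ?_
          · exact mul_ne_zero hNn0 g5
          · exact mul_ne_zero hNnα g6)]
        ring
    rw [hprod, ha, hb, div_sub_div_same]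
    field_simp
    ring
  have hsum : ∑ n ∈ Finset.range (N+1),
      ((N:ℂ) * (bc α n * bc (-α) (N-n) * (2*((N:ℂ)-(n:ℂ)) - 2*(n:ℂ) - 2*α))) = u 0 - u (N+1) := by
    rw [Finset.sum_congr rfl key, Finset.sum_range_sub' u (N+1)]
  have hu0 : u 0 = 0 := by simp [hu, Complex.Gamma_zero]
  have huN : u (N+1) = 0 := by
    rw [hu]
    simp only [Nat.cast_add, Nat.cast_one]
    rw [show (N:ℂ)-((N:ℂ)+1)+1 = 0 by ring]
    simp [Complex.Gamma_zero]
  rw [← Finset.mul_sum] at hsum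
  rw [hu0, huN, sub_zero] at hsum
  have hNne : (N:ℂ) ≠ 0 := Nat.cast_ne_zero.mpr hN
  exact (mul_eq_zero.mp hsum).resolve_left hNne

lemma summable_norm_bt' {α : ℂ} (hre : α.re = 0) (him : α.im ≠ 0) {k t : ℝ}
    (hk : 0 < k) (ht : 0 < t) : Summable (fun n => ‖bt' α k n t‖) :=
  Summable.of_nonneg_of_le (fun _ => norm_nonneg _)
    (fun n => bt'_bound hre him hk ht n t ⟨by linarith, by linarith⟩) (summable_ub him hk ht)

lemma conj_besselJ {α : ℂ} (hre : α.re = 0) (x : ℝ) :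
    (starRingEnd ℂ) (besselJ α x) = besselJ (-α) x := by
  have hconj : (starRingEnd ℂ) α = -α := by
    apply Complex.ext <;> simp [hre]
  rw [besselJ, besselJ]
  rw [show ((starRingEnd ℂ) (∑' n : ℕ, ((-1 : ℂ) ^ n / ((n.factorial : ℂ) * Complex.Gamma (α + (n : ℂ) + 1))) *
    Complex.exp ((α + 2 * (n : ℂ)) * (Real.log (x / 2) : ℂ))) : ℂ)
    = star (∑' n : ℕ, ((-1 : ℂ) ^ n / ((n.factorial : ℂ) * Complex.Gamma (α + (n : ℂ) + 1))) *
    Complex.exp ((α + 2 * (n : ℂ)) * (Real.log (x / 2) : ℂ))) from rfl, tsum_star]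
  refine tsum_congr fun n => ?_
  have h1 : star (((-1 : ℂ) ^ n / ((n.factorial : ℂ) * Complex.Gamma (α + (n : ℂ) + 1))))
      = ((-1 : ℂ) ^ n / ((n.factorial : ℂ) * Complex.Gamma (-α + (n : ℂ) + 1))) := by
    rw [star_div₀, star_pow, star_neg, star_one, star_mul', show (star (Complex.Gamma (α + (n : ℂ) + 1)) : ℂ)
      = Complex.Gamma ((starRingEnd ℂ) (α + (n : ℂ) + 1)) from (Complex.Gamma_conj _).symm]
    simp [hconj]
  have harg : (starRingEnd ℂ) ((α + 2 * (n : ℂ)) * (Real.log (x / 2) : ℂ))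
      = (-α + 2 * (n : ℂ)) * (Real.log (x / 2) : ℂ) := by
    have h2n : (starRingEnd ℂ) (2*(n:ℂ)) = 2*(n:ℂ) := by
      rw [show (2*(n:ℂ)) = ((2*n:ℕ):ℂ) by push_cast; ring, Complex.conj_natCast]
    rw [map_mul, map_add, hconj, h2n, Complex.conj_ofReal]
  have h2 : star (Complex.exp ((α + 2 * (n : ℂ)) * (Real.log (x / 2) : ℂ)))
      = Complex.exp ((-α + 2 * (n : ℂ)) * (Real.log (x / 2) : ℂ)) := by
    rw [show (star (Complex.exp ((α + 2 * (n : ℂ)) * (Real.log (x / 2) : ℂ))) : ℂ)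
      = Complex.exp ((starRingEnd ℂ) ((α + 2 * (n : ℂ)) * (Real.log (x / 2) : ℂ))) from
        (Complex.exp_conj _).symm, harg]
  rw [star_mul', h1, h2]

lemma eval0 {α : ℂ} (him : α.im ≠ 0) :
    (-2) * α / (Complex.Gamma (α+1) * Complex.Gamma (-α+1))
      = -2 * Complex.sin (α * (Real.pi:ℂ)) / (Real.pi:ℂ) := by
  have hα0 : α ≠ 0 := fun h => him (by rw [h]; simp)
  have hΓα : Complex.Gamma α ≠ 0 := gamma_ne_zero_of_im him
  have hΓ1α : Complex.Gamma (1-α) ≠ 0 := gamma_ne_zero_of_im (by simpa using him)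
  have h := Complex.Gamma_mul_Gamma_one_sub α
  have hπ : ((Real.pi:ℝ):ℂ) ≠ 0 := Complex.ofReal_ne_zero.mpr Real.pi_ne_zero
  have hsin : Complex.sin ((Real.pi:ℂ) * α) ≠ 0 := by
    intro h0
    rw [h0, div_zero] at h
    exact (mul_ne_zero hΓα hΓ1α) h
  rw [Complex.Gamma_add_one _ hα0, show (-α+1 : ℂ) = 1-α by ring]
  rw [mul_assoc, h]
  rw [show ((Real.pi:ℂ)) * α = α * (Real.pi:ℂ) by ring] at hsin ⊢
  field_simp

lemma besselJ_wronskian {α : ℂ} (hre : α.re = 0) (him : α.im ≠ 0) {k t : ℝ}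
    (hk : 0 < k) (ht : 0 < t) :
    (t:ℂ) * ((∑' n, bt α k n t) * (∑' n, bt' (-α) k n t)
        - (∑' n, bt' α k n t) * (∑' n, bt (-α) k n t))
      = -2 * Complex.sin (α * (Real.pi:ℂ)) / (Real.pi:ℂ) := by
  have hre' : (-α).re = 0 := by simp [hre]
  have him' : (-α).im ≠ 0 := by simpa using him
  have hA : Summable fun n => ‖bt α k n t‖ := summable_norm_bt hre him hk ht
  have hB : Summable fun n => ‖bt (-α) k n t‖ := summable_norm_bt hre' him' hk ht
  have hA' : Summable fun n => ‖bt' α k n t‖ := summable_norm_bt' hre him hk ht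
  have hB' : Summable fun n => ‖bt' (-α) k n t‖ := summable_norm_bt' hre' him' hk ht
  have h1 : (∑' n, bt α k n t) * (∑' n, bt' (-α) k n t)
      = ∑' N, ∑ kl ∈ Finset.HasAntidiagonal.antidiagonal N, bt α k kl.1 t * bt' (-α) k kl.2 t :=
    tsum_mul_tsum_eq_tsum_sum_antidiagonal_of_summable_norm hA hB'
  have h2 : (∑' n, bt' α k n t) * (∑' n, bt (-α) k n t)
      = ∑' N, ∑ kl ∈ Finset.HasAntidiagonal.antidiagonal N, bt' α k kl.1 t * bt (-α) k kl.2 t :=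
    tsum_mul_tsum_eq_tsum_sum_antidiagonal_of_summable_norm hA' hB
  have hs1 : Summable fun N => ∑ kl ∈ Finset.HasAntidiagonal.antidiagonal N, bt α k kl.1 t * bt' (-α) k kl.2 t :=
    (summable_norm_sum_mul_antidiagonal_of_summable_norm hA hB').of_norm
  have hs2 : Summable fun N => ∑ kl ∈ Finset.HasAntidiagonal.antidiagonal N, bt' α k kl.1 t * bt (-α) k kl.2 t :=
    (summable_norm_sum_mul_antidiagonal_of_summable_norm hA' hB).of_norm
  rw [h1, h2, ← Summable.tsum_sub hs1 hs2, ← tsum_mul_left]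
  have htC : (t:ℂ) ≠ 0 := Complex.ofReal_ne_zero.mpr ht.ne'
  -- per-term computation
  have hterm : ∀ N : ℕ, (t:ℂ) * ((∑ kl ∈ Finset.HasAntidiagonal.antidiagonal N, bt α k kl.1 t * bt' (-α) k kl.2 t)
      - ∑ kl ∈ Finset.HasAntidiagonal.antidiagonal N, bt' α k kl.1 t * bt (-α) k kl.2 t)
      = Complex.exp ((2*(N:ℂ)) * (Real.log (k*t/2) : ℂ)) *
        ∑ n ∈ Finset.range (N+1), bc α n * bc (-α) (N-n) * (2*((N:ℂ)-(n:ℂ)) - 2*(n:ℂ) - 2*α) := by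
    intro N
    rw [← Finset.sum_sub_distrib, Finset.mul_sum, Finset.mul_sum,
      Finset.Nat.sum_antidiagonal_eq_sum_range_succ_mk]
    refine Finset.sum_congr rfl fun n hn => ?_
    rw [Finset.mem_range] at hn
    have hnN : n ≤ N := Nat.lt_succ_iff.mp hn
    have hcast : ((N - n : ℕ) : ℂ) = (N:ℂ) - (n:ℂ) := by push_cast [Nat.cast_sub hnN]; ring
    show (t:ℂ) * (bt α k n t * bt' (-α) k (N-n) t - bt' α k n t * bt (-α) k (N-n) t)
      = Complex.exp ((2*(N:ℂ)) * (Real.log (k*t/2) : ℂ)) *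
        (bc α n * bc (-α) (N-n) * (2*((N:ℂ)-(n:ℂ)) - 2*(n:ℂ) - 2*α))
    have hE : Complex.exp ((α + 2*(n:ℂ)) * (Real.log (k*t/2) : ℂ)) *
        Complex.exp ((-α + 2*(((N-n:ℕ)):ℂ)) * (Real.log (k*t/2) : ℂ))
        = Complex.exp ((2*(N:ℂ)) * (Real.log (k*t/2) : ℂ)) := by
      rw [← Complex.exp_add]
      congr 1
      rw [hcast]; ring
    have e2 : bt α k n t * bt (-α) k (N-n) t
        = bc α n * bc (-α) (N-n) * Complex.exp ((2*(N:ℂ)) * (Real.log (k*t/2) : ℂ)) := by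
      rw [bt, bt, mul_mul_mul_comm, hE]
    have e1 : (t:ℂ) * (bt α k n t * bt' (-α) k (N-n) t - bt' α k n t * bt (-α) k (N-n) t)
        = (bt α k n t * bt (-α) k (N-n) t) * (2*((N:ℂ)-(n:ℂ)) - 2*(n:ℂ) - 2*α) := by
      rw [bt, bt, bt', bt', hcast]
      field_simp
      ring
    rw [e1, e2]
    ring
  rw [tsum_congr hterm]
  rw [tsum_eq_single 0 (fun N hN => by
    rw [telescope him N hN, mul_zero])]
  · rw [show ((2*((0:ℕ):ℂ)) * (Real.log (k*t/2) : ℂ)) = 0 by simp, Complex.exp_zero, one_mul]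
    rw [show Finset.range (0+1) = {0} from rfl, Finset.sum_singleton]
    rw [show ((0:ℕ) - (0:ℕ)) = 0 from rfl]
    rw [bc, bc]
    simp only [pow_zero, Nat.factorial_zero, Nat.cast_one, Nat.cast_zero, one_mul, add_zero, mul_zero]
    rw [← eval0 him]
    ring


lemma expand_aux (C rt r' X Y X' Y' Em D : ℂ) (hD : D ≠ 0) :
 C * rt * ((Y - Em * X) / D) * (C * r' * ((X - Em * Y) / D) + C * rt * ((X' - Em * Y') / D))
      - C * rt * ((X - Em * Y) / D) * (C * r' * ((Y - Em * X) / D) + C * rt * ((Y' - Em * X') / D))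
      = (C^2 * rt^2 * (1 - Em^2) / D^2) * (Y * X' - X * Y') := by
  field_simp
  ring

lemma hXY_aux (X Y X' Y' S t π : ℂ) (ht : t ≠ 0) (hπ : π ≠ 0)
    (hW : t * (X * Y' - X' * Y) = -2 * S / π) :
    Y * X' - X * Y' = 2 * S / (π * t) := by
  field_simp at hW ⊢
  linear_combination -hW

lemma final_aux (a b t π I : ℂ) (hab : a * b = 1) (hba : b - a ≠ 0) (ht : t ≠ 0) (hπ : π ≠ 0) :
    (b * t^3 * (1 - a^2) / ((b - a)/2)^2) * (2 * ((a - b) * I / 2) / (π * t))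
      = -(4 * I / π) * t^2 := by
  have h2 : ((b-a)/2)^2 ≠ 0 := pow_ne_zero _ (div_ne_zero hba two_ne_zero)
  field_simp
  ring_nf
  linear_combination (4*I*a*b - 4*a^2*I) * hab


end WronskAux

open WronskAux in
/-- the Wronskian of the mode function and its conjugate equals
`−(4i/π)·t²`; in particular it is independent of `k`. -/
theorem wronskian_mode_function (m R : ℝ) (hm : 0 < m) (hR : 0 < R) (hmR : 3 / 2 < m * R)
    (t k : ℝ) (ht : 0 < t) (hk : 0 < k) :
    modeV m R t k * deriv (fun s => (starRingEnd ℂ) (modeV m R s k)) t -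
        (starRingEnd ℂ) (modeV m R t k) * deriv (fun s => modeV m R s k) t =
      -(4 * Complex.I / (Real.pi : ℂ)) * (t : ℂ) ^ 2 := by
  set μ : ℝ := modeMu m R with hμdef
  have hμ : 0 < μ := by
    rw [hμdef, modeMu]
    apply Real.sqrt_pos.mpr
    nlinarith
  set α : ℂ := modeNu m R with hαdef
  have hα : α = Complex.I * (μ:ℂ) := rfl
  have hre : α.re = 0 := by rw [hα]; simp
  have him : α.im ≠ 0 := by rw [hα]; simpa using hμ.ne'
  have hre' : (-α).re = 0 := by simp [hre]
  have him' : (-α).im ≠ 0 := by simpa using him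
  set C : ℂ := ((Real.exp (-(μ * Real.pi / 2)) : ℝ) : ℂ) with hC
  set D : ℂ := Complex.I * Complex.sin (α * (Real.pi:ℂ)) with hD
  set Em : ℂ := Complex.exp (-(Complex.I * (Real.pi : ℂ) * α)) with hEm
  set X : ℂ := ∑' n, bt α k n t with hX
  set Y : ℂ := ∑' n, bt (-α) k n t with hY
  set X' : ℂ := ∑' n, bt' α k n t with hX'
  set Y' : ℂ := ∑' n, bt' (-α) k n t with hY'
  have hP : HasDerivAt (fun s => besselJ α (k * s)) X' t := hasDerivAt_besselJ hre him hk ht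
  have hQ : HasDerivAt (fun s => besselJ (-α) (k * s)) Y' t := hasDerivAt_besselJ hre' him' hk ht
  -- derivative of the power factor
  have hr : HasDerivAt (fun s : ℝ => ((s ^ ((3:ℝ)/2) : ℝ) : ℂ))
      ((((3:ℝ)/2 * t ^ ((3:ℝ)/2 - 1)) : ℝ) : ℂ) t :=
    (Real.hasDerivAt_rpow_const (Or.inl ht.ne')).ofReal_comp
  set rt : ℂ := ((t ^ ((3:ℝ)/2) : ℝ) : ℂ) with hrt
  set r' : ℂ := (((3:ℝ)/2 * t ^ ((3:ℝ)/2 - 1) : ℝ) : ℂ) with hr'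
  have hCr : HasDerivAt (fun s : ℝ => C * ((s ^ ((3:ℝ)/2) : ℝ) : ℂ)) (C * r') t := hr.const_mul C
  -- derivative of v
  have hH : HasDerivAt (fun s => (besselJ (-α) (k*s) - Em * besselJ α (k*s)) / D)
      ((Y' - Em * X') / D) t := (hQ.sub (hP.const_mul Em)).div_const D
  have hv : HasDerivAt (fun s => modeV m R s k)
      (C * r' * ((Y - Em * X) / D) + C * rt * ((Y' - Em * X') / D)) t := by
    have h0 := hCr.mul hH
    have hfun : (fun s => modeV m R s k)
        = fun s => (C * ((s ^ ((3:ℝ)/2) : ℝ) : ℂ)) * ((besselJ (-α) (k*s) - Em * besselJ α (k*s)) / D) := by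
      funext s
      rfl
    rw [hfun]
    exact h0
  -- conjugate function
  have hconjfun : (fun s => (starRingEnd ℂ) (modeV m R s k))
      = fun s => (C * ((s ^ ((3:ℝ)/2) : ℝ) : ℂ)) * ((besselJ α (k*s) - Em * besselJ (-α) (k*s)) / D) := by
    funext s
    have h1 : modeV m R s k
        = (C * ((s ^ ((3:ℝ)/2) : ℝ) : ℂ)) * ((besselJ (-α) (k*s) - Em * besselJ α (k*s)) / D) := rfl
    rw [h1]
    rw [map_mul, map_mul, map_div₀, map_sub, map_mul]
    rw [conj_besselJ hre' (k*s), show (- -α) = α by ring, conj_besselJ hre (k*s)]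
    have hcC : (starRingEnd ℂ) C = C := Complex.conj_ofReal _
    have hcrt : (starRingEnd ℂ) ((s ^ ((3:ℝ)/2) : ℝ) : ℂ) = ((s ^ ((3:ℝ)/2) : ℝ) : ℂ) :=
      Complex.conj_ofReal _
    have hcα : (starRingEnd ℂ) α = -α := by apply Complex.ext <;> simp [hre]
    have hcEm : (starRingEnd ℂ) Em = Em := by
      rw [hEm, ← Complex.exp_conj]
      congr 1
      rw [map_neg, map_mul, map_mul, hcα, Complex.conj_I, Complex.conj_ofReal]
      ring
    have hcD : (starRingEnd ℂ) D = D := by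
      rw [hD, map_mul, Complex.conj_I, ← Complex.sin_conj, map_mul, hcα, Complex.conj_ofReal]
      rw [show (-α * (Real.pi:ℂ)) = -(α * (Real.pi:ℂ)) by ring, Complex.sin_neg]
      ring
    rw [hcC, hcrt, hcEm, hcD]
  have hH2 : HasDerivAt (fun s => (besselJ α (k*s) - Em * besselJ (-α) (k*s)) / D)
      ((X' - Em * Y') / D) t := (hP.sub (hQ.const_mul Em)).div_const D
  have hw : HasDerivAt (fun s => (starRingEnd ℂ) (modeV m R s k))
      (C * r' * ((X - Em * Y) / D) + C * rt * ((X' - Em * Y') / D)) t := by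
    rw [hconjfun]
    have h0 := hCr.mul hH2
    exact h0
  -- values at t
  have hvt : modeV m R t k = C * rt * ((Y - Em * X) / D) := rfl
  have hwt : (starRingEnd ℂ) (modeV m R t k) = C * rt * ((X - Em * Y) / D) := by
    have h2 := congrFun hconjfun t
    exact h2
  -- Wronskian of the Bessel series
  have hW : (t:ℂ) * (X * Y' - X' * Y) = -2 * Complex.sin (α * (Real.pi:ℂ)) / (Real.pi:ℂ) :=
    besselJ_wronskian hre him hk ht
  -- scalar facts
  have hπ : ((Real.pi : ℝ) : ℂ) ≠ 0 := Complex.ofReal_ne_zero.mpr Real.pi_ne_zero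
  have htC : (t:ℂ) ≠ 0 := Complex.ofReal_ne_zero.mpr ht.ne'
  set a : ℝ := Real.exp (Real.pi * μ) with ha
  set b : ℝ := Real.exp (-(Real.pi * μ)) with hb
  have hab : (a:ℂ) * (b:ℂ) = 1 := by
    rw [ha, hb, ← Complex.ofReal_mul, ← Real.exp_add]
    norm_num
  have hEma : Em = (a:ℂ) := by
    rw [hEm, hα, show (-(Complex.I * (Real.pi:ℂ) * (Complex.I * (μ:ℂ))))
      = -(Complex.I*Complex.I) * ((Real.pi:ℂ) * (μ:ℂ)) by ring, Complex.I_mul_I]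
    rw [show (-(-1:ℂ)) * ((Real.pi:ℂ) * (μ:ℂ)) = (((Real.pi * μ : ℝ)):ℂ) by push_cast; ring]
    rw [← Complex.ofReal_exp]
  have hC2 : C^2 = (b:ℂ) := by
    rw [hC, hb, ← Complex.ofReal_pow, sq, ← Real.exp_add,
      show -(μ * Real.pi / 2) + -(μ * Real.pi / 2) = -(Real.pi * μ) by ring]
  have hsin : Complex.sin (α * (Real.pi:ℂ)) = ((a:ℂ) - (b:ℂ)) * Complex.I / 2 := by
    rw [Complex.sin]
    rw [show (-(α * (Real.pi:ℂ)) * Complex.I) = -(Complex.I * (Real.pi:ℂ) * α) by ring]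
    rw [← hEm, hEma]
    rw [show (α * (Real.pi:ℂ) * Complex.I) = -(-(Complex.I * (Real.pi:ℂ) * α)) by ring]
    rw [hα, show (-(-(Complex.I * (Real.pi:ℂ) * (Complex.I * (μ:ℂ)))))
      = (Complex.I*Complex.I) * ((Real.pi:ℂ) * (μ:ℂ)) by ring, Complex.I_mul_I]
    rw [show ((-1:ℂ)) * ((Real.pi:ℂ) * (μ:ℂ)) = (((-(Real.pi * μ) : ℝ)):ℂ) by push_cast; ring]
    rw [← Complex.ofReal_exp, ← hb]
  have hDval : D = ((b:ℂ) - (a:ℂ)) / 2 := by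
    rw [hD, hsin, show Complex.I * (((a:ℂ) - (b:ℂ)) * Complex.I / 2)
      = (Complex.I * Complex.I) * (((a:ℂ) - (b:ℂ)) / 2) by ring, Complex.I_mul_I]
    ring
  have hba : (b:ℂ) - (a:ℂ) ≠ 0 := by
    rw [← Complex.ofReal_sub]
    refine Complex.ofReal_ne_zero.mpr (sub_ne_zero.mpr (ne_of_lt ?_))
    rw [ha, hb]
    apply Real.exp_lt_exp.mpr
    nlinarith [Real.pi_pos]
  have hDne : D ≠ 0 := by
    rw [hDval]
    exact div_ne_zero hba two_ne_zero
  have hrt2 : rt^2 = (t:ℂ)^3 := by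
    rw [hrt]
    norm_cast
    rw [← Real.rpow_natCast (t ^ ((3:ℝ)/2)) 2, ← Real.rpow_mul ht.le,
      show (3:ℝ)/2 * ((2:ℕ):ℝ) = ((3:ℕ):ℝ) by norm_num, Real.rpow_natCast]
  -- assemble
  rw [hv.deriv, hw.deriv, hwt, hvt]
  rw [expand_aux C rt r' X Y X' Y' Em D hDne]
  have hXY : Y * X' - X * Y' = 2 * Complex.sin (α * (Real.pi:ℂ)) / ((Real.pi:ℂ) * (t:ℂ)) :=
    hXY_aux X Y X' Y' _ _ _ htC hπ hW
  rw [hXY, hC2, hrt2, hEma, hDval, hsin]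
  exact final_aux (a:ℂ) (b:ℂ) (t:ℂ) (Real.pi:ℂ) Complex.I hab hba htC hπ
end
end

section
/- There is a constant C > 0 such that for all t ≥ 1 and all k > 0, |v(t,k)| ≤ C·t^{3/2}·ω(k)^{−1/2}, where ω(k) = √(1+k²). -/
open Complex MeasureTheory Filter
open scoped RealInnerProductSpace

noncomputable section

namespace MFB

def gcoef (α : ℂ) (n : ℕ) : ℂ :=
  (-1 : ℂ) ^ n / ((n.factorial : ℂ) * Complex.Gamma (α + (n : ℂ) + 1))

def Gf (α : ℂ) (j : ℕ) (z : ℂ) : ℂ :=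
  ∑' n : ℕ, gcoef α n * (α + 2 * (n : ℂ)) ^ j * Complex.exp ((α + 2 * (n : ℂ)) * z)

def Kc (α : ℂ) : ℝ := ‖Complex.Gamma (α + 1)‖⁻¹

lemma add_ne_zero_of_im (α : ℂ) (him : α.im ≠ 0) (c : ℂ) (hc : c.im = 0) : α + c ≠ 0 := by
  intro h
  apply him
  have := congrArg Complex.im h
  simpa [hc] using this

lemma gamma_arg_ne (α : ℂ) (him : α.im ≠ 0) (c : ℂ) (hc : c.im = 0) :
    Complex.Gamma (α + c) ≠ 0 := by
  apply Complex.Gamma_ne_zero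
  intro m h
  apply him
  have := congrArg Complex.im h
  simpa [hc] using this

lemma gamma_lb (α : ℂ) (hre : α.re = 0) (him : α.im ≠ 0) (n : ℕ) :
    (n.factorial : ℝ) * ‖Complex.Gamma (α + 1)‖ ≤ ‖Complex.Gamma (α + (n : ℂ) + 1)‖ := by
  induction n with
  | zero => simp
  | succ n ih =>
    have h1 : α + ((n : ℂ) + 1) + 1 = (α + (n : ℂ) + 1) + 1 := by ring
    have hne : α + (n : ℂ) + 1 ≠ 0 := by
      have := add_ne_zero_of_im α him ((n : ℂ) + 1) (by simp)
      rwa [← add_assoc] at this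
    have h2 : Complex.Gamma (α + ((n : ℕ) + 1 : ℕ) + 1)
        = (α + (n : ℂ) + 1) * Complex.Gamma (α + (n : ℂ) + 1) := by
      push_cast
      rw [h1, Complex.Gamma_add_one _ hne]
    rw [h2, norm_mul]
    have hn1 : ((n : ℝ) + 1) ≤ ‖α + (n : ℂ) + 1‖ := by
      have : ((n : ℝ) + 1) = (α + (n : ℂ) + 1).re := by simp [hre]
      rw [this]
      exact (le_abs_self _).trans (Complex.abs_re_le_norm _)
    calc ((n + 1).factorial : ℝ) * ‖Complex.Gamma (α + 1)‖
        = ((n : ℝ) + 1) * ((n.factorial : ℝ) * ‖Complex.Gamma (α + 1)‖) := by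
          rw [Nat.factorial_succ]; push_cast; ring
      _ ≤ ‖α + (n : ℂ) + 1‖ * ‖Complex.Gamma (α + (n : ℂ) + 1)‖ := by
          apply mul_le_mul hn1 ih (by positivity) (by positivity)


lemma sq_le_pow4 (n : ℕ) : ((n : ℝ) + 1) ^ 2 ≤ 4 ^ n := by
  induction n with
  | zero => norm_num
  | succ n ih =>
    have h4 : (4 : ℝ) ^ (n + 1) = 4 * 4 ^ n := by ring
    rw [h4]
    push_cast
    nlinarith [ih, sq_nonneg ((n : ℝ)), Nat.cast_nonneg (α := ℝ) n]

lemma summable_u (K A M : ℝ) (hK : 0 ≤ K) (hA : 0 ≤ A) (hM : 0 ≤ M) :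
    Summable (fun n : ℕ =>
      K / ((n.factorial : ℝ) * n.factorial) * (A + 2 * n + 1) ^ 2 *
        Real.exp ((A + 2 * n) * M)) := by
  have hbig : Summable (fun n : ℕ =>
      (K * Real.exp (A * M) * (A + 3) ^ 2) * ((4 * Real.exp (2 * M)) ^ n / n.factorial)) :=
    (Real.summable_pow_div_factorial _).mul_left _
  apply Summable.of_nonneg_of_le (fun n => by positivity) _ hbig
  intro n
  have hfac1 : (1 : ℝ) ≤ (n.factorial : ℝ) := by exact_mod_cast Nat.one_le_iff_ne_zero.mpr n.factorial_ne_zero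
  have hfacpos : (0 : ℝ) < (n.factorial : ℝ) := by positivity
  have e1 : Real.exp ((A + 2 * n) * M) = Real.exp (A * M) * (Real.exp (2 * M)) ^ n := by
    rw [← Real.exp_nat_mul, ← Real.exp_add]; ring_nf
  have e2 : (A + 2 * n + 1) ^ 2 ≤ (A + 3) ^ 2 * ((n : ℝ) + 1) ^ 2 := by
    have h1 : A + 2 * n + 1 ≤ (A + 3) * ((n : ℝ) + 1) := by nlinarith [Nat.cast_nonneg (α := ℝ) n]
    have h2 : (0:ℝ) ≤ A + 2 * n + 1 := by positivity
    nlinarith [Nat.cast_nonneg (α := ℝ) n]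
  have e3 : ((n : ℝ) + 1) ^ 2 ≤ 4 ^ n := sq_le_pow4 n
  have expnn : (0:ℝ) < Real.exp (2*M) := Real.exp_pos _
  calc K / ((n.factorial : ℝ) * n.factorial) * (A + 2 * n + 1) ^ 2 * Real.exp ((A + 2 * n) * M)
      ≤ K / ((n.factorial : ℝ) * n.factorial) * ((A + 3) ^ 2 * 4 ^ n) *
        (Real.exp (A * M) * (Real.exp (2 * M)) ^ n) := by
        rw [e1]
        apply mul_le_mul _ le_rfl (by positivity) (by positivity)
        exact mul_le_mul le_rfl (e2.trans (by nlinarith [e3, sq_nonneg (A+3)])) (by positivity) (by positivity)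
    _ ≤ K / (n.factorial : ℝ) * ((A + 3) ^ 2 * 4 ^ n) * (Real.exp (A * M) * Real.exp (2 * M) ^ n) := by
        have hdd : K / ((n.factorial : ℝ) * n.factorial) ≤ K / (n.factorial : ℝ) := by
          gcongr
          nlinarith [hfac1, hfacpos]
        exact mul_le_mul (mul_le_mul hdd le_rfl (by positivity) (by positivity)) le_rfl
          (by positivity) (by positivity)
    _ = (K * Real.exp (A * M) * (A + 3) ^ 2) * ((4 * Real.exp (2 * M)) ^ n / n.factorial) := by
        rw [mul_pow]; ring


lemma term_norm_le (α : ℂ) (j : ℕ) (hj : j ≤ 2) (n : ℕ) (z : ℂ) (M : ℝ) (hzM : ‖z‖ ≤ M) :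
    ‖gcoef α n * (α + 2 * (n : ℂ)) ^ j * Complex.exp ((α + 2 * (n : ℂ)) * z)‖ ≤
      ‖gcoef α n‖ * (‖α‖ + 2 * n + 1) ^ 2 * Real.exp ((‖α‖ + 2 * n) * M) := by
  have hM : 0 ≤ M := le_trans (norm_nonneg z) hzM
  have hb : ‖α + 2 * (n : ℂ)‖ ≤ ‖α‖ + 2 * n := by
    calc ‖α + 2 * (n : ℂ)‖ ≤ ‖α‖ + ‖(2 : ℂ) * (n : ℂ)‖ := norm_add_le _ _
      _ = ‖α‖ + 2 * n := by rw [norm_mul]; simp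
  have hbnn : (0:ℝ) ≤ ‖α‖ + 2 * n := by positivity
  rw [norm_mul, norm_mul]
  have h1 : ‖(α + 2 * (n : ℂ)) ^ j‖ ≤ (‖α‖ + 2 * n + 1) ^ 2 := by
    rw [norm_pow]
    calc ‖α + 2 * (n : ℂ)‖ ^ j ≤ (‖α‖ + 2 * n + 1) ^ j := by
          apply pow_le_pow_left₀ (norm_nonneg _) (hb.trans (by linarith))
      _ ≤ (‖α‖ + 2 * n + 1) ^ 2 := by
          apply pow_le_pow_right₀ (by linarith) hj
  have h2 : ‖Complex.exp ((α + 2 * (n : ℂ)) * z)‖ ≤ Real.exp ((‖α‖ + 2 * n) * M) := by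
    rw [Complex.norm_exp]
    apply Real.exp_le_exp.mpr
    calc ((α + 2 * (n : ℂ)) * z).re ≤ ‖(α + 2 * (n : ℂ)) * z‖ := Complex.re_le_norm _
      _ = ‖α + 2 * (n : ℂ)‖ * ‖z‖ := norm_mul _ _
      _ ≤ (‖α‖ + 2 * n) * M := mul_le_mul hb hzM (norm_nonneg _) hbnn
  calc ‖gcoef α n‖ * ‖(α + 2 * (n : ℂ)) ^ j‖ * ‖Complex.exp ((α + 2 * (n : ℂ)) * z)‖
      ≤ ‖gcoef α n‖ * (‖α‖ + 2 * n + 1) ^ 2 * Real.exp ((‖α‖ + 2 * n) * M) := by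
        exact mul_le_mul (mul_le_mul le_rfl h1 (norm_nonneg _) (norm_nonneg _)) h2
          (norm_nonneg _) (by positivity)


lemma gcoef_norm_le (α : ℂ) (hre : α.re = 0) (him : α.im ≠ 0) (n : ℕ) :
    ‖gcoef α n‖ ≤ Kc α / ((n.factorial : ℝ) * n.factorial) := by
  have hG1 : (0:ℝ) < ‖Complex.Gamma (α + 1)‖ := by
    rw [norm_pos_iff]
    exact gamma_arg_ne α him 1 (by simp)
  have hfac : (0:ℝ) < (n.factorial : ℝ) := by positivity
  have hlb := gamma_lb α hre him n
  have hGn : (0:ℝ) < ‖Complex.Gamma (α + (n : ℂ) + 1)‖ := lt_of_lt_of_le (by positivity) hlb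
  have hnorm : ‖gcoef α n‖ = 1 / ((n.factorial : ℝ) * ‖Complex.Gamma (α + (n : ℂ) + 1)‖) := by
    rw [gcoef, norm_div, norm_mul, norm_pow]
    simp [Complex.norm_natCast]
  rw [hnorm, Kc]
  rw [div_le_div_iff₀ (by positivity) (by positivity)]
  have h := mul_le_mul_of_nonneg_left (mul_le_mul_of_nonneg_left hlb hfac.le)
    (inv_nonneg.mpr hG1.le)
  calc (1:ℝ) * ((n.factorial : ℝ) * n.factorial)
      = ‖Complex.Gamma (α+1)‖⁻¹ * ((n.factorial : ℝ) * ((n.factorial : ℝ) * ‖Complex.Gamma (α+1)‖)) := by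
        rw [inv_mul_eq_div, eq_div_iff (ne_of_gt hG1)]
        ring
    _ ≤ ‖Complex.Gamma (α+1)‖⁻¹ * ((n.factorial : ℝ) * ‖Complex.Gamma (α + (n:ℂ) + 1)‖) := h


lemma ubnd_summable (α : ℂ) (hre : α.re = 0) (him : α.im ≠ 0) (M : ℝ) (hM : 0 ≤ M) :
    Summable (fun n : ℕ => Kc α / ((n.factorial : ℝ) * n.factorial) * (‖α‖ + 2 * n + 1) ^ 2 *
      Real.exp ((‖α‖ + 2 * n) * M)) :=
  summable_u (Kc α) ‖α‖ M (by rw [Kc]; positivity) (norm_nonneg _) hM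

lemma term_norm_le' (α : ℂ) (hre : α.re = 0) (him : α.im ≠ 0) (j : ℕ) (hj : j ≤ 2) (n : ℕ)
    (z : ℂ) (M : ℝ) (hzM : ‖z‖ ≤ M) :
    ‖gcoef α n * (α + 2 * (n : ℂ)) ^ j * Complex.exp ((α + 2 * (n : ℂ)) * z)‖ ≤
      Kc α / ((n.factorial : ℝ) * n.factorial) * (‖α‖ + 2 * n + 1) ^ 2 *
        Real.exp ((‖α‖ + 2 * n) * M) := by
  refine (term_norm_le α j hj n z M hzM).trans ?_
  have := gcoef_norm_le α hre him n
  gcongr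

lemma summable_term (α : ℂ) (hre : α.re = 0) (him : α.im ≠ 0) (j : ℕ) (hj : j ≤ 2) (z : ℂ) :
    Summable (fun n : ℕ =>
      gcoef α n * (α + 2 * (n : ℂ)) ^ j * Complex.exp ((α + 2 * (n : ℂ)) * z)) := by
  apply Summable.of_norm
  apply Summable.of_nonneg_of_le (fun n => norm_nonneg _)
    (fun n => term_norm_le' α hre him j hj n z ‖z‖ le_rfl)
  exact ubnd_summable α hre him ‖z‖ (norm_nonneg _)

lemma hasDerivAt_Gf (α : ℂ) (hre : α.re = 0) (him : α.im ≠ 0) (j : ℕ) (hj : j ≤ 1) (z : ℂ) :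
    HasDerivAt (Gf α j) (Gf α (j + 1) z) z := by
  set M : ℝ := ‖z‖ + 1 with hMdef
  have hM : 0 ≤ M := by positivity
  set U : Set ℂ := Metric.ball (0 : ℂ) M with hUdef
  have hzU : z ∈ U := by
    simp only [hUdef, Metric.mem_ball, dist_zero_right]
    linarith
  set F : ℕ → ℂ → ℂ := fun n w => gcoef α n * (α + 2 * (n : ℂ)) ^ j *
    Complex.exp ((α + 2 * (n : ℂ)) * w) with hFdef
  have hFd : ∀ n : ℕ, ∀ w : ℂ, HasDerivAt (F n)
      (gcoef α n * (α + 2 * (n : ℂ)) ^ j * ((α + 2 * (n : ℂ)) *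
        Complex.exp ((α + 2 * (n : ℂ)) * w))) w := by
    intro n w
    have h1 : HasDerivAt (fun w : ℂ => (α + 2 * (n : ℂ)) * w) (α + 2 * (n : ℂ)) w := by
      simpa using (hasDerivAt_id w).const_mul (α + 2 * (n : ℂ))
    have h2 := h1.cexp
    have h3 := h2.const_mul (gcoef α n * (α + 2 * (n : ℂ)) ^ j)
    exact h3.congr_deriv (by ring)
  have hf : ∀ n : ℕ, DifferentiableOn ℂ (F n) U := fun n =>
    fun w _ => ((hFd n w).differentiableAt).differentiableWithinAt
  have hu := ubnd_summable α hre him M hM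
  have hF_le : ∀ (n : ℕ) (w : ℂ), w ∈ U → ‖F n w‖ ≤
      Kc α / ((n.factorial : ℝ) * n.factorial) * (‖α‖ + 2 * n + 1) ^ 2 *
        Real.exp ((‖α‖ + 2 * n) * M) := by
    intro n w hw
    apply term_norm_le' α hre him j (le_trans hj one_le_two) n w M
    simp only [hUdef, Metric.mem_ball, dist_zero_right] at hw
    exact hw.le
  have hdiff : DifferentiableOn ℂ (fun w : ℂ => ∑' n : ℕ, F n w) U :=
    differentiableOn_tsum_of_summable_norm hu hf Metric.isOpen_ball hF_le
  have hsum : HasSum (fun n : ℕ => deriv (F n) z)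
      (deriv (fun w : ℂ => ∑' n : ℕ, F n w) z) :=
    hasSum_deriv_of_summable_norm hu hf Metric.isOpen_ball hF_le hzU
  have hGeq : Gf α j = fun w : ℂ => ∑' n : ℕ, F n w := rfl
  have hderiv : deriv (Gf α j) z = Gf α (j + 1) z := by
    rw [hGeq]
    rw [← hsum.tsum_eq]
    rw [Gf]
    apply tsum_congr
    intro n
    rw [(hFd n z).deriv]
    ring
  have hda : DifferentiableAt ℂ (Gf α j) z := by
    rw [hGeq]
    exact hdiff.differentiableAt (Metric.isOpen_ball.mem_nhds hzU)
  have := hda.hasDerivAt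
  rwa [hderiv] at this


lemma gcoef_succ (α : ℂ) (him : α.im ≠ 0) (n : ℕ) :
    gcoef α (n + 1) * (((n : ℂ) + 1) * (α + (n : ℂ) + 1)) = - gcoef α n := by
  have hΓ : Complex.Gamma (α + (n : ℂ) + 1) ≠ 0 := by
    have := gamma_arg_ne α him ((n : ℂ) + 1) (by simp)
    rwa [← add_assoc] at this
  have hΓrec : Complex.Gamma (α + ((n : ℕ) + 1 : ℕ) + 1)
      = (α + (n : ℂ) + 1) * Complex.Gamma (α + (n : ℂ) + 1) := by
    push_cast
    have h1 : α + ((n : ℂ) + 1) + 1 = (α + (n : ℂ) + 1) + 1 := by ring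
    rw [h1, Complex.Gamma_add_one _ (by
      have := add_ne_zero_of_im α him ((n : ℂ) + 1) (by simp)
      rwa [← add_assoc] at this)]
  have hne1 : α + (n : ℂ) + 1 ≠ 0 := by
    have := add_ne_zero_of_im α him ((n : ℂ) + 1) (by simp)
    rwa [← add_assoc] at this
  have hfacn : ((n.factorial : ℂ)) ≠ 0 := by
    exact_mod_cast Nat.cast_ne_zero.mpr n.factorial_ne_zero
  have hn1 : ((n : ℂ) + 1) ≠ 0 := by
    have : (((n + 1 : ℕ) : ℂ)) ≠ 0 := Nat.cast_ne_zero.mpr (Nat.succ_ne_zero n)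
    push_cast at this
    exact this
  rw [gcoef, gcoef, hΓrec, Nat.factorial_succ]
  push_cast
  field_simp
  ring

lemma Gf_ode (α : ℂ) (hre : α.re = 0) (him : α.im ≠ 0) (z : ℂ) :
    Gf α 2 z = (α ^ 2 - 4 * Complex.exp (2 * z)) * Gf α 0 z := by
  set e : ℕ → ℂ := fun n => Complex.exp ((α + 2 * (n : ℂ)) * z) with he
  set c : ℕ → ℂ := fun n => gcoef α n with hc
  have hs0 : Summable (fun n : ℕ => c n * (α + 2 * (n : ℂ)) ^ 0 * e n) :=
    summable_term α hre him 0 (by norm_num) z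
  have hs2 : Summable (fun n : ℕ => c n * (α + 2 * (n : ℂ)) ^ 2 * e n) :=
    summable_term α hre him 2 le_rfl z
  set f : ℕ → ℂ := fun n => c n * ((α + 2 * (n : ℂ)) ^ 2 - α ^ 2) * e n with hf
  have hsf : Summable f := by
    have := hs2.sub (hs0.mul_left (α ^ 2))
    apply this.congr
    intro n
    simp only [hf]
    ring
  -- step 1 : Gf α 2 z = tsum f + α^2 * Gf α 0 z
  have step1 : Gf α 2 z = (∑' n, f n) + α ^ 2 * Gf α 0 z := by
    rw [Gf, Gf, ← tsum_mul_left, ← Summable.tsum_add hsf (hs0.mul_left (α ^ 2))]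
    apply tsum_congr
    intro n
    simp only [hf]
    ring
  -- step 2 : tsum f = -4 exp(2z) Gf α 0 z
  have hshift : ∀ n : ℕ, f (n + 1) = (-4 * Complex.exp (2 * z)) * (c n * (α + 2 * (n:ℂ)) ^ 0 * e n) := by
    intro n
    have hcoef := gcoef_succ α him n
    have hexp : e (n + 1) = Complex.exp (2 * z) * e n := by
      simp only [he]
      rw [← Complex.exp_add]
      congr 1
      push_cast
      ring
    have hquad : (α + 2 * (((n : ℕ) + 1 : ℕ) : ℂ)) ^ 2 - α ^ 2
        = 4 * (((n : ℂ) + 1) * (α + (n : ℂ) + 1)) := by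
      push_cast
      ring
    simp only [hf, hc]
    calc gcoef α (n + 1) * ((α + 2 * (((n + 1 : ℕ)) : ℂ)) ^ 2 - α ^ 2) * e (n + 1)
        = gcoef α (n + 1) * (4 * (((n : ℂ) + 1) * (α + (n : ℂ) + 1))) *
            (Complex.exp (2 * z) * e n) := by rw [hquad, hexp]
      _ = (4 * (gcoef α (n + 1) * (((n : ℂ) + 1) * (α + (n : ℂ) + 1)))) *
            (Complex.exp (2 * z) * e n) := by ring
      _ = (4 * (- gcoef α n)) * (Complex.exp (2 * z) * e n) := by rw [hcoef]
      _ = -4 * Complex.exp (2 * z) * (gcoef α n * (α + 2 * (n : ℂ)) ^ 0 * e n) := by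
          rw [pow_zero]; ring
  have hf0 : f 0 = 0 := by
    simp only [hf]
    push_cast
    ring
  have step2 : (∑' n, f n) = -4 * Complex.exp (2 * z) * Gf α 0 z := by
    rw [Summable.tsum_eq_zero_add hsf, hf0, zero_add]
    calc (∑' n, f (n + 1))
        = ∑' n, (-4 * Complex.exp (2 * z)) * (c n * (α + 2 * (n:ℂ)) ^ 0 * e n) := by
          exact tsum_congr hshift
      _ = -4 * Complex.exp (2 * z) * Gf α 0 z := by
          rw [tsum_mul_left]
          rfl
  rw [step1, step2]
  ring


def Pf (a b α : ℂ) (j : ℕ) (z : ℂ) : ℂ := a * Gf α j z + b * Gf (-α) j z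

def hf (a b α : ℂ) : ℕ → ℂ → ℂ
  | 0, z => Complex.exp (z / 2) * Pf a b α 0 z
  | 1, z => Complex.exp (z / 2) * (Pf a b α 0 z / 2 + Pf a b α 1 z)
  | _, z => Complex.exp (z / 2) * (Pf a b α 0 z / 4 + Pf a b α 1 z + Pf a b α 2 z)

variable {a b α : ℂ}

lemma hasDerivAt_Pf (hre : α.re = 0) (him : α.im ≠ 0) (j : ℕ) (hj : j ≤ 1) (z : ℂ) :
    HasDerivAt (Pf a b α j) (Pf a b α (j + 1) z) z := by
  have h1 := (hasDerivAt_Gf α hre him j hj z).const_mul a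
  have h2 := (hasDerivAt_Gf (-α) (by simp [hre]) (by simp [him]) j hj z).const_mul b
  exact h1.add h2

lemma hasDerivAt_exp_half (z : ℂ) :
    HasDerivAt (fun z : ℂ => Complex.exp (z / 2)) (Complex.exp (z / 2) / 2) z := by
  have h1 : HasDerivAt (fun z : ℂ => z / 2) (1 / 2) z := (hasDerivAt_id z).div_const 2
  simpa [div_eq_mul_inv, mul_comm] using h1.cexp

lemma hasDerivAt_hf0 (hre : α.re = 0) (him : α.im ≠ 0) (z : ℂ) :
    HasDerivAt (hf a b α 0) (hf a b α 1 z) z := by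
  have h := (hasDerivAt_exp_half z).mul (hasDerivAt_Pf (a := a) (b := b) hre him 0 (by norm_num) z)
  have he : hf a b α 0 = fun z => Complex.exp (z / 2) * Pf a b α 0 z := rfl
  rw [he]
  refine HasDerivAt.congr_deriv h ?_
  show _ = Complex.exp (z / 2) * (Pf a b α 0 z / 2 + Pf a b α 1 z)
  ring

lemma hasDerivAt_hf1 (hre : α.re = 0) (him : α.im ≠ 0) (z : ℂ) :
    HasDerivAt (hf a b α 1) (hf a b α 2 z) z := by
  have hp0 := hasDerivAt_Pf (a := a) (b := b) hre him 0 (by norm_num) z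
  have hp1 := hasDerivAt_Pf (a := a) (b := b) hre him 1 (by norm_num) z
  have hin := (hp0.div_const 2).add hp1
  have h := (hasDerivAt_exp_half z).mul hin
  have he : hf a b α 1 = fun z => Complex.exp (z / 2) * (Pf a b α 0 z / 2 + Pf a b α 1 z) := rfl
  rw [he]
  refine HasDerivAt.congr_deriv h ?_
  show _ = Complex.exp (z / 2) * (Pf a b α 0 z / 4 + Pf a b α 1 z + Pf a b α 2 z)
  simp only [Pi.add_apply]
  ring

lemma hf_ode (hre : α.re = 0) (him : α.im ≠ 0) (z : ℂ) :
    hf a b α 2 z - hf a b α 1 z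
      = (α ^ 2 - 4 * Complex.exp (2 * z) - 1 / 4) * hf a b α 0 z := by
  have hode : Pf a b α 2 z = (α ^ 2 - 4 * Complex.exp (2 * z)) * Pf a b α 0 z := by
    rw [Pf, Pf, Gf_ode α hre him z, Gf_ode (-α) (by simp [hre]) (by simp [him]) z]
    ring_nf
  show Complex.exp (z / 2) * (Pf a b α 0 z / 4 + Pf a b α 1 z + Pf a b α 2 z) -
      Complex.exp (z / 2) * (Pf a b α 0 z / 2 + Pf a b α 1 z) = _
  rw [hode]
  show _ = (α ^ 2 - 4 * Complex.exp (2 * z) - 1 / 4) * (Complex.exp (z / 2) * Pf a b α 0 z)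
  ring


def lC (x : ℝ) : ℂ := ((Real.log (x / 2) : ℝ) : ℂ)
def Wf (a b α : ℂ) (x : ℝ) : ℂ := hf a b α 0 (lC x)
def Wf1 (a b α : ℂ) (x : ℝ) : ℂ := (x : ℂ)⁻¹ * hf a b α 1 (lC x)
def En (a b α : ℂ) (x : ℝ) : ℝ :=
  Complex.normSq (Wf a b α x) + Complex.normSq (Wf1 a b α x)

variable {a b α : ℂ}

lemma hasDerivAt_lC {x : ℝ} (hx : 0 < x) : HasDerivAt lC ((x⁻¹ : ℝ) : ℂ) x := by
  have h1 : HasDerivAt (fun y : ℝ => y / 2) (1 / 2) x := (hasDerivAt_id x).div_const 2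
  have h2 := (Real.hasDerivAt_log (by positivity : x / 2 ≠ 0)).comp x h1
  have h3 : HasDerivAt (fun y : ℝ => Real.log (y / 2)) x⁻¹ x := by
    exact h2.congr_deriv (by ring)
  exact h3.ofReal_comp

lemma hasDerivAt_Wf (hre : α.re = 0) (him : α.im ≠ 0) {x : ℝ} (hx : 0 < x) :
    HasDerivAt (Wf a b α) (Wf1 a b α x) x := by
  have h := (hasDerivAt_hf0 (a := a) (b := b) hre him (lC x)).scomp x (hasDerivAt_lC hx)
  have : Wf a b α = hf a b α 0 ∘ lC := rfl
  rw [this]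
  refine h.congr_deriv ?_
  rw [Wf1]
  simp [smul_eq_mul, Complex.ofReal_inv]

lemma cexp_two_lC {x : ℝ} (hx : 0 < x) :
    Complex.exp (2 * lC x) = ((x ^ 2 / 4 : ℝ) : ℂ) := by
  have : (2 : ℂ) * lC x = (((2 * Real.log (x / 2) : ℝ) : ℝ) : ℂ) := by
    rw [lC]; push_cast; ring
  rw [this, ← Complex.ofReal_exp]
  congr 1
  rw [two_mul, Real.exp_add, Real.exp_log (by positivity)]
  ring

lemma hasDerivAt_Wf1 (hre : α.re = 0) (him : α.im ≠ 0) {q : ℝ}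
    (hq : α ^ 2 - 1 / 4 = -((q : ℝ) : ℂ)) {x : ℝ} (hx : 0 < x) :
    HasDerivAt (Wf1 a b α) (-(((x ^ 2 + q) / x ^ 2 : ℝ) : ℂ) * Wf a b α x) x := by
  have hinv0 : HasDerivAt (fun y : ℝ => ((y⁻¹ : ℝ) : ℂ)) ((-(x ^ 2)⁻¹ : ℝ) : ℂ) x :=
    (hasDerivAt_inv hx.ne').ofReal_comp
  have hinv : HasDerivAt (fun y : ℝ => ((y : ℂ))⁻¹) ((-(x ^ 2)⁻¹ : ℝ) : ℂ) x := by
    convert hinv0 using 2 with y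
    · simp
  have houter : HasDerivAt (fun y : ℝ => hf a b α 1 (lC y))
      (((x⁻¹ : ℝ) : ℂ) • hf a b α 2 (lC x)) x :=
    (hasDerivAt_hf1 (a := a) (b := b) hre him (lC x)).scomp x (hasDerivAt_lC hx)
  have h := hinv.mul houter
  have heq : Wf1 a b α = fun y : ℝ => ((y : ℂ))⁻¹ * hf a b α 1 (lC y) := rfl
  rw [heq]
  refine h.congr_deriv ?_
  have hode := hf_ode (a := a) (b := b) hre him (lC x)
  rw [cexp_two_lC hx] at hode
  have hxne : (x : ℂ) ≠ 0 := Complex.ofReal_ne_zero.mpr hx.ne'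
  have key : hf a b α 2 (lC x) - hf a b α 1 (lC x)
      = -(((x ^ 2 + q) : ℝ) : ℂ) * Wf a b α x := by
    rw [hode, Wf]
    congr 1
    rw [show α ^ 2 - 4 * ((x ^ 2 / 4 : ℝ) : ℂ) - 1 / 4
        = (α ^ 2 - 1 / 4) - ((x ^ 2 : ℝ) : ℂ) by push_cast; ring, hq]
    push_cast
    ring
  have expand : -(((x ^ 2 + q) / x ^ 2 : ℝ) : ℂ) * Wf a b α x
      = ((-(x ^ 2)⁻¹ : ℝ) : ℂ) * hf a b α 1 (lC x) +
        (x : ℂ)⁻¹ * (((x⁻¹ : ℝ) : ℂ) • hf a b α 2 (lC x)) := by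
    rw [smul_eq_mul]
    have h2 : (x : ℂ)⁻¹ * (((x⁻¹ : ℝ) : ℂ) * hf a b α 2 (lC x))
        = ((x : ℂ))⁻¹ ^ 2 * hf a b α 2 (lC x) := by
      push_cast
      ring
    rw [h2]
    have h3 : ((-(x ^ 2)⁻¹ : ℝ) : ℂ) * hf a b α 1 (lC x)
        = -((x : ℂ))⁻¹ ^ 2 * hf a b α 1 (lC x) := by
      push_cast
      ring
    rw [h3]
    have h4 : -((x:ℂ))⁻¹ ^ 2 * hf a b α 1 (lC x) + ((x:ℂ))⁻¹ ^ 2 * hf a b α 2 (lC x)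
        = ((x:ℂ))⁻¹ ^ 2 * (hf a b α 2 (lC x) - hf a b α 1 (lC x)) := by ring
    rw [h4, key]
    push_cast
    field_simp
  rw [expand]

lemma hasDerivAt_normSq_comp {f : ℝ → ℂ} {f' : ℂ} {x : ℝ} (hf : HasDerivAt f f' x) :
    HasDerivAt (fun y => Complex.normSq (f y))
      (2 * ((f x).re * f'.re + (f x).im * f'.im)) x := by
  have hre : HasDerivAt (fun y => (f y).re) f'.re x :=
    Complex.reCLM.hasFDerivAt.comp_hasDerivAt x hf
  have him : HasDerivAt (fun y => (f y).im) f'.im x :=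
    Complex.imCLM.hasFDerivAt.comp_hasDerivAt x hf
  have h := (hre.mul hre).add (him.mul him)
  have heq : (fun y => Complex.normSq (f y))
      = fun y => (f y).re * (f y).re + (f y).im * (f y).im := by
    funext y
    rw [Complex.normSq_apply]
  rw [heq]
  exact h.congr_deriv (by ring)


lemma normSq_pair_ineq (A B : ℂ) (r s : ℝ) (hs : 0 ≤ s) (hrs : r = 1 + s) :
    2 * (A.re * B.re + A.im * B.im) +
      2 * (B.re * (-((r : ℝ) : ℂ) * A).re + B.im * (-((r : ℝ) : ℂ) * A).im)
      ≤ s * (Complex.normSq A + Complex.normSq B) := by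
  have hDre : (-((r : ℝ) : ℂ) * A).re = -(r * A.re) := by simp [Complex.mul_re]
  have hDim : (-((r : ℝ) : ℂ) * A).im = -(r * A.im) := by simp [Complex.mul_im]
  rw [hDre, hDim, hrs, Complex.normSq_apply, Complex.normSq_apply]
  have expand : 2 * (A.re * B.re + A.im * B.im) +
      2 * (B.re * -((1 + s) * A.re) + B.im * -((1 + s) * A.im))
      = -s * (2 * (A.re * B.re + A.im * B.im)) := by ring
  rw [expand]
  nlinarith [sq_nonneg (A.re - B.re), sq_nonneg (A.im - B.im),
    sq_nonneg (A.re + B.re), sq_nonneg (A.im + B.im), mul_nonneg hs (sq_nonneg (A.re - B.re)),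
    mul_nonneg hs (sq_nonneg (A.im - B.im)), mul_nonneg hs (sq_nonneg (A.re + B.re)),
    mul_nonneg hs (sq_nonneg (A.im + B.im))]

lemma En_bound (hre : α.re = 0) (him : α.im ≠ 0) {q : ℝ} (hq0 : 0 ≤ q)
    (hq : α ^ 2 - 1 / 4 = -((q : ℝ) : ℂ)) {x : ℝ} (hx1 : 1 ≤ x) :
    En a b α x ≤ En a b α 1 * Real.exp q := by
  -- the energy satisfies a differential inequality; use the decreasing function Φ
  set Phi : ℝ → ℝ := fun y => En a b α y * Real.exp (q / y) with hPhi
  have EnD : ∀ y : ℝ, 0 < y → ∃ d : ℝ, HasDerivAt (En a b α) d y ∧ d ≤ q / y ^ 2 * En a b α y := by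
    intro y hy
    have hW := hasDerivAt_Wf (a := a) (b := b) hre him hy
    have hW1 := hasDerivAt_Wf1 (a := a) (b := b) hre him hq hy
    have h1 := hasDerivAt_normSq_comp hW
    have h2 := hasDerivAt_normSq_comp hW1
    refine ⟨_, h1.add h2, ?_⟩
    set A := Wf a b α y
    set B := Wf1 a b α y
    exact normSq_pair_ineq A B _ _ (by positivity) (by field_simp)
  have PhiD : ∀ y : ℝ, 0 < y → ∃ d : ℝ, HasDerivAt Phi d y ∧ d ≤ 0 := by
    intro y hy
    obtain ⟨d, hd, hdle⟩ := EnD y hy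
    have hexp : HasDerivAt (fun y : ℝ => Real.exp (q / y))
        (Real.exp (q / y) * (q * -(y ^ 2)⁻¹)) y := by
      have h1 := ((hasDerivAt_inv hy.ne').const_mul q).exp
      convert h1 using 2 <;> simp [div_eq_mul_inv]
    refine ⟨_, hd.mul hexp, ?_⟩
    have hE0 : 0 ≤ En a b α y :=
      add_nonneg (Complex.normSq_nonneg _) (Complex.normSq_nonneg _)
    have hep : 0 < Real.exp (q / y) := Real.exp_pos _
    have hy2 : 0 < y ^ 2 := by positivity
    have : d * Real.exp (q / y) + En a b α y * (Real.exp (q / y) * (q * -(y ^ 2)⁻¹))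
        = Real.exp (q / y) * (d - q / y ^ 2 * En a b α y) := by
      field_simp
      ring
    rw [this]
    apply mul_nonpos_of_nonneg_of_nonpos hep.le
    linarith
  have hanti : AntitoneOn Phi (Set.Ici 1) := by
    apply antitoneOn_of_deriv_nonpos (convex_Ici 1)
    · intro y hy
      have hy0 : (0 : ℝ) < y := lt_of_lt_of_le one_pos (by exact hy)
      obtain ⟨d, hd, _⟩ := PhiD y hy0
      exact hd.continuousAt.continuousWithinAt
    · intro y hy
      rw [interior_Ici] at hy
      have hy0 : (0 : ℝ) < y := lt_trans one_pos hy
      obtain ⟨d, hd, _⟩ := PhiD y hy0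
      exact hd.differentiableAt.differentiableWithinAt
    · intro y hy
      rw [interior_Ici] at hy
      have hy0 : (0 : ℝ) < y := lt_trans one_pos hy
      obtain ⟨d, hd, hd0⟩ := PhiD y hy0
      rw [hd.deriv]
      exact hd0
  have hx0 : (0 : ℝ) < x := lt_of_lt_of_le one_pos hx1
  have hE0 : 0 ≤ En a b α x :=
    add_nonneg (Complex.normSq_nonneg _) (Complex.normSq_nonneg _)
  have h1 : En a b α x ≤ Phi x := by
    have : (1 : ℝ) ≤ Real.exp (q / x) := Real.one_le_exp (by positivity)
    calc En a b α x = En a b α x * 1 := by ring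
      _ ≤ En a b α x * Real.exp (q / x) := by nlinarith
  have h2 : Phi x ≤ Phi 1 := hanti (Set.self_mem_Ici) hx1 hx1
  have h3 : Phi 1 = En a b α 1 * Real.exp q := by simp [hPhi]
  linarith

lemma Wf_le (hre : α.re = 0) (him : α.im ≠ 0) {q : ℝ} (hq0 : 0 ≤ q)
    (hq : α ^ 2 - 1 / 4 = -((q : ℝ) : ℂ)) {x : ℝ} (hx1 : 1 ≤ x) :
    ‖Wf a b α x‖ ≤ Real.sqrt (En a b α 1 * Real.exp q) := by
  have hE := En_bound (a := a) (b := b) hre him hq0 hq hx1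
  have h1 : ‖Wf a b α x‖ ^ 2 ≤ En a b α 1 * Real.exp q := by
    have : ‖Wf a b α x‖ ^ 2 = Complex.normSq (Wf a b α x) := by
      rw [Complex.normSq_eq_norm_sq]
    rw [this]
    have : (0:ℝ) ≤ Complex.normSq (Wf1 a b α x) := Complex.normSq_nonneg _
    rw [En] at hE
    linarith
  have := Real.sqrt_le_sqrt h1
  rwa [Real.sqrt_sq (norm_nonneg _)] at this


def aC (α : ℂ) : ℂ :=
  -Complex.exp (-(Complex.I * (Real.pi : ℂ) * α)) / (Complex.I * Complex.sin (α * (Real.pi : ℂ)))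
def bC (α : ℂ) : ℂ := 1 / (Complex.I * Complex.sin (α * (Real.pi : ℂ)))
def S (α : ℂ) : ℝ := ∑' n : ℕ, ‖gcoef α n‖

lemma besselJ_eq (α : ℂ) (x : ℝ) : besselJ α x = Gf α 0 (lC x) := by
  rw [besselJ, Gf]
  apply tsum_congr
  intro n
  rw [gcoef, pow_zero, mul_one]
  rfl

lemma hankel1_eq (α : ℂ) (x : ℝ) :
    hankel1 α x = aC α * besselJ α x + bC α * besselJ (-α) x := by
  rw [hankel1, aC, bC]
  ring

lemma Wf_eq (α : ℂ) (x : ℝ) :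
    Wf (aC α) (bC α) α x = Complex.exp (lC x / 2) * hankel1 α x := by
  show Complex.exp (lC x / 2) * Pf (aC α) (bC α) α 0 (lC x) = _
  rw [Pf, hankel1_eq, besselJ_eq, besselJ_eq]

lemma norm_exp_lC_half (x : ℝ) (hx : 0 < x) :
    ‖Complex.exp (lC x / 2)‖ = Real.sqrt (x / 2) := by
  have h1 : (lC x / 2) = (((Real.log (x / 2) / 2 : ℝ)) : ℂ) := by
    rw [lC]; push_cast; ring
  rw [h1, Complex.norm_exp]
  have h2 : ((Real.log (x / 2) / 2 : ℝ) : ℂ).re = Real.log (x / 2) / 2 := by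
    simp
  rw [h2]
  have h3 : (Real.exp (Real.log (x / 2) / 2)) ^ 2 = x / 2 := by
    rw [← Real.exp_nat_mul]
    push_cast
    rw [show (2 : ℝ) * (Real.log (x / 2) / 2) = Real.log (x / 2) by ring,
      Real.exp_log (by positivity)]
  have h4 : Real.sqrt (x / 2) = Real.sqrt ((Real.exp (Real.log (x / 2) / 2)) ^ 2) := by
    rw [h3]
  rw [h4, Real.sqrt_sq (Real.exp_nonneg _)]

lemma summable_norm_gcoef (α : ℂ) (hre : α.re = 0) (him : α.im ≠ 0) :
    Summable (fun n : ℕ => ‖gcoef α n‖) := by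
  have hK : 0 ≤ Kc α := by rw [Kc]; positivity
  apply Summable.of_nonneg_of_le (fun n => norm_nonneg _) (gcoef_norm_le α hre him)
  apply Summable.of_nonneg_of_le (fun n => by positivity)
    (fun n => ?_) ((Real.summable_pow_div_factorial 1).mul_left (Kc α))
  have h1 : (1 : ℝ) ≤ (n.factorial : ℝ) := by
    exact_mod_cast Nat.one_le_iff_ne_zero.mpr n.factorial_ne_zero
  rw [one_pow, mul_one_div, div_le_div_iff₀ (by positivity) (by positivity)]
  nlinarith [mul_nonneg (mul_nonneg hK (le_trans zero_le_one h1)) (sub_nonneg.mpr h1)]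

lemma besselJ_small (α : ℂ) (hre : α.re = 0) (him : α.im ≠ 0) (x : ℝ) (hx : 0 < x)
    (hx2 : x ≤ 2) : ‖besselJ α x‖ ≤ S α := by
  have hl : Real.log (x / 2) ≤ 0 :=
    Real.log_nonpos (by positivity) (by linarith)
  rw [besselJ]
  have hterm : ∀ n : ℕ, ‖((-1 : ℂ) ^ n / ((n.factorial : ℂ) * Complex.Gamma (α + (n : ℂ) + 1))) *
      Complex.exp ((α + 2 * (n : ℂ)) * (Real.log (x / 2) : ℂ))‖ ≤ ‖gcoef α n‖ := by
    intro n
    rw [norm_mul]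
    have h1 : ‖Complex.exp ((α + 2 * (n : ℂ)) * (Real.log (x / 2) : ℂ))‖ ≤ 1 := by
      rw [Complex.norm_exp]
      have hre2 : ((α + 2 * (n : ℂ)) * (Real.log (x / 2) : ℂ)).re
          = (2 * n) * Real.log (x / 2) := by
        simp [Complex.mul_re, hre]
      rw [hre2]
      have : (2 * (n : ℝ)) * Real.log (x / 2) ≤ 0 :=
        mul_nonpos_of_nonneg_of_nonpos (by positivity) hl
      exact Real.exp_le_one_iff.mpr this
    calc ‖((-1 : ℂ) ^ n / ((n.factorial : ℂ) * Complex.Gamma (α + (n : ℂ) + 1)))‖ *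
          ‖Complex.exp ((α + 2 * (n : ℂ)) * (Real.log (x / 2) : ℂ))‖
        ≤ ‖gcoef α n‖ * 1 := by
          apply mul_le_mul _ h1 (norm_nonneg _) (norm_nonneg _)
          rw [gcoef]
      _ = ‖gcoef α n‖ := mul_one _
  have hsum := summable_norm_gcoef α hre him
  calc ‖∑' n : ℕ, ((-1 : ℂ) ^ n / ((n.factorial : ℂ) * Complex.Gamma (α + (n : ℂ) + 1))) *
        Complex.exp ((α + 2 * (n : ℂ)) * (Real.log (x / 2) : ℂ))‖
      ≤ ∑' n : ℕ, ‖((-1 : ℂ) ^ n / ((n.factorial : ℂ) * Complex.Gamma (α + (n : ℂ) + 1))) *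
        Complex.exp ((α + 2 * (n : ℂ)) * (Real.log (x / 2) : ℂ))‖ := by
        apply norm_tsum_le_tsum_norm
        exact Summable.of_nonneg_of_le (fun n => norm_nonneg _) hterm hsum
    _ ≤ ∑' n : ℕ, ‖gcoef α n‖ := by
        apply Summable.tsum_le_tsum hterm
          (Summable.of_nonneg_of_le (fun n => norm_nonneg _) hterm hsum) hsum
    _ = S α := rfl

lemma hankel_small (α : ℂ) (hre : α.re = 0) (him : α.im ≠ 0) (x : ℝ) (hx : 0 < x)
    (hx2 : x ≤ 2) : ‖hankel1 α x‖ ≤ ‖aC α‖ * S α + ‖bC α‖ * S (-α) := by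
  rw [hankel1_eq]
  calc ‖aC α * besselJ α x + bC α * besselJ (-α) x‖
      ≤ ‖aC α * besselJ α x‖ + ‖bC α * besselJ (-α) x‖ := norm_add_le _ _
    _ = ‖aC α‖ * ‖besselJ α x‖ + ‖bC α‖ * ‖besselJ (-α) x‖ := by rw [norm_mul, norm_mul]
    _ ≤ ‖aC α‖ * S α + ‖bC α‖ * S (-α) := by
        apply add_le_add
        · exact mul_le_mul_of_nonneg_left (besselJ_small α hre him x hx hx2) (norm_nonneg _)
        · exact mul_le_mul_of_nonneg_left
            (besselJ_small (-α) (by simp [hre]) (by simp [him]) x hx hx2) (norm_nonneg _)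

lemma hankel_decay (α : ℂ) (hre : α.re = 0) (him : α.im ≠ 0) {q : ℝ} (hq0 : 0 ≤ q)
    (hq : α ^ 2 - 1 / 4 = -((q : ℝ) : ℂ)) (x : ℝ) (hx1 : 1 ≤ x) :
    ‖hankel1 α x‖ ≤
      Real.sqrt 2 * Real.sqrt (En (aC α) (bC α) α 1 * Real.exp q) / Real.sqrt x := by
  have hx0 : (0 : ℝ) < x := lt_of_lt_of_le one_pos hx1
  have hW := Wf_le (a := aC α) (b := bC α) hre him hq0 hq hx1
  rw [Wf_eq, norm_mul, norm_exp_lC_half x hx0] at hW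
  have hs2 : Real.sqrt (x / 2) = Real.sqrt x / Real.sqrt 2 := Real.sqrt_div hx0.le 2
  have hpos : 0 < Real.sqrt (x / 2) := Real.sqrt_pos.mpr (by linarith)
  have h4 : ‖hankel1 α x‖ ≤ Real.sqrt (En (aC α) (bC α) α 1 * Real.exp q) /
      Real.sqrt (x / 2) := by
    rw [le_div_iff₀ hpos, mul_comm]
    exact hW
  have h5 : Real.sqrt (En (aC α) (bC α) α 1 * Real.exp q) / (Real.sqrt x / Real.sqrt 2)
      = Real.sqrt 2 * Real.sqrt (En (aC α) (bC α) α 1 * Real.exp q) / Real.sqrt x := by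
    rw [div_div_eq_mul_div, mul_comm]
  rw [hs2, h5] at h4
  exact h4


end MFB

set_option maxHeartbeats 1000000 in
/-- `|v(t,k)| ≤ C·t^{3/2}·ω(k)^{−1/2}` for `t ≥ 1`, `k > 0`. -/
theorem mode_function_bound (m R : ℝ) (hm : 0 < m) (hR : 0 < R) (hmR : 3 / 2 < m * R) :
    ∃ C : ℝ, 0 < C ∧ ∀ t : ℝ, 1 ≤ t → ∀ k : ℝ, 0 < k →
      ‖modeV m R t k‖ ≤ C * t ^ ((3 : ℝ) / 2) * omegaK k ^ (-(1 : ℝ) / 2) := by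
  set μ : ℝ := modeMu m R with hμdef
  have hμpos : 0 < μ := by
    rw [hμdef, modeMu]
    apply Real.sqrt_pos.mpr
    nlinarith
  set ν : ℂ := modeNu m R with hνdef
  have hre : ν.re = 0 := by
    rw [hνdef, modeNu]
    simp
  have him : ν.im ≠ 0 := by
    rw [hνdef, modeNu]
    simpa using hμpos.ne'
  set q : ℝ := 1 / 4 + μ ^ 2 with hqdef
  have hq0 : (0 : ℝ) ≤ q := by positivity
  have hq : ν ^ 2 - 1 / 4 = -((q : ℝ) : ℂ) := by
    rw [hνdef, modeNu, hqdef]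
    push_cast
    rw [mul_pow, Complex.I_sq]
    ring
  set D0 : ℝ := Real.sqrt 2 * Real.sqrt (MFB.En (MFB.aC ν) (MFB.bC ν) ν 1 * Real.exp q)
    with hD0def
  set B0 : ℝ := ‖MFB.aC ν‖ * MFB.S ν + ‖MFB.bC ν‖ * MFB.S (-ν) with hB0def
  have hD0nn : 0 ≤ D0 := by rw [hD0def]; positivity
  -- B0 could be of any sign a priori?  It's a bound on a norm when applied, but as an
  -- expression it is a sum of products of norms and tsums of norms, hence nonneg:
  have hB0nn : 0 ≤ B0 := by
    have h1 : (0:ℝ) ≤ ‖hankel1 ν 1‖ := norm_nonneg _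
    have h2 := MFB.hankel_small ν hre him 1 one_pos (by norm_num)
    linarith
  set C : ℝ := 2 * (B0 + D0) + 1 with hCdef
  refine ⟨C, by positivity, ?_⟩
  intro t ht k hk
  have htpos : (0 : ℝ) < t := lt_of_lt_of_le one_pos ht
  have hktpos : (0 : ℝ) < k * t := mul_pos hk htpos
  -- reduce to a bound on the Hankel function
  have habs : ‖modeV m R t k‖
      = Real.exp (-(μ * Real.pi / 2)) * t ^ ((3 : ℝ) / 2) * ‖hankel1 ν (k * t)‖ := by
    rw [modeV, norm_mul, norm_mul, Complex.norm_real, Complex.norm_real, Real.norm_eq_abs,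
        Real.norm_eq_abs,
      abs_of_pos (Real.exp_pos _), abs_of_pos (Real.rpow_pos_of_pos htpos _)]
  have hexp1 : Real.exp (-(μ * Real.pi / 2)) ≤ 1 := by
    apply Real.exp_le_one_iff.mpr
    have := Real.pi_pos
    nlinarith
  have ht32 : (0:ℝ) < t ^ ((3 : ℝ) / 2) := Real.rpow_pos_of_pos htpos _
  -- key : ‖hankel1 ν (k*t)‖ ≤ C * omegaK k ^ (-(1:ℝ)/2)
  have hω1 : (1:ℝ) ≤ omegaK k := by
    rw [omegaK]
    apply Real.one_le_sqrt.mpr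
    nlinarith
  have hωpos : (0:ℝ) < omegaK k := lt_of_lt_of_le one_pos hω1
  have hωrpow : omegaK k ^ (-(1 : ℝ) / 2) = (Real.sqrt (omegaK k))⁻¹ := by
    rw [show (-(1 : ℝ) / 2) = -(1/2) by ring, Real.rpow_neg hωpos.le,
      ← Real.sqrt_eq_rpow]
  have hsqω : (0:ℝ) < Real.sqrt (omegaK k) := Real.sqrt_pos.mpr hωpos
  have key : ‖hankel1 ν (k * t)‖ ≤ C * omegaK k ^ (-(1 : ℝ) / 2) := by
    rw [hωrpow]
    rcases le_or_gt k 1 with hk1 | hk1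
    · -- small k : use the global bound B0 + D0
      have hH : ‖hankel1 ν (k * t)‖ ≤ B0 + D0 := by
        rcases le_or_gt (k * t) 2 with hkt2 | hkt2
        · have := MFB.hankel_small ν hre him (k * t) hktpos hkt2
          rw [← hB0def] at this
          linarith
        · have hkt1 : (1:ℝ) ≤ k * t := by linarith
          have hdec := MFB.hankel_decay ν hre him hq0 hq (k * t) hkt1
          have hsq : (1:ℝ) ≤ Real.sqrt (k * t) := by
            rw [show (1:ℝ) = Real.sqrt 1 by simp]
            exact Real.sqrt_le_sqrt (by linarith)
          have hDk : Real.sqrt 2 * Real.sqrt (MFB.En (MFB.aC ν) (MFB.bC ν) ν 1 * Real.exp q) /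
              Real.sqrt (k * t) ≤ D0 := by
            rw [← hD0def]
            exact div_le_self hD0nn hsq
          linarith
      -- ω ≤ √2 so (√ω)⁻¹ ≥ 1/2
      have hω2 : omegaK k ≤ 2 := by
        rw [omegaK]
        have h4 : Real.sqrt (1 + k ^ 2) ≤ Real.sqrt 4 := Real.sqrt_le_sqrt (by nlinarith)
        have h5 : Real.sqrt 4 = 2 := by
          rw [show (4:ℝ) = 2 ^ 2 by norm_num, Real.sqrt_sq (by norm_num : (0:ℝ) ≤ 2)]
        linarith
      have hsqω2 : Real.sqrt (omegaK k) ≤ 2 := by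
        calc Real.sqrt (omegaK k) ≤ Real.sqrt 2 := Real.sqrt_le_sqrt hω2
          _ ≤ 2 := by
            nlinarith [Real.sq_sqrt (by norm_num : (0:ℝ) ≤ 2), Real.sqrt_nonneg 2]
      have hinv : (1:ℝ)/2 ≤ (Real.sqrt (omegaK k))⁻¹ := by
        rw [← one_div]
        exact one_div_le_one_div_of_le hsqω hsqω2
      calc ‖hankel1 ν (k * t)‖ ≤ B0 + D0 := hH
        _ = (2 * (B0 + D0)) * (1/2) := by ring
        _ ≤ (2 * (B0 + D0) + 1) * (1/2) := by nlinarith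
        _ ≤ C * (Real.sqrt (omegaK k))⁻¹ := by
            rw [hCdef]
            apply mul_le_mul le_rfl hinv (by norm_num) (by positivity)
    · -- large k
      have hkt1 : (1:ℝ) ≤ k * t := by nlinarith
      have hdec := MFB.hankel_decay ν hre him hq0 hq (k * t) hkt1
      rw [← hD0def] at hdec
      have hsqk : (0:ℝ) < Real.sqrt k := Real.sqrt_pos.mpr (by linarith)
      have h1 : ‖hankel1 ν (k * t)‖ ≤ D0 / Real.sqrt k := by
        have hmono : Real.sqrt k ≤ Real.sqrt (k * t) := Real.sqrt_le_sqrt (by nlinarith)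
        have h2 := div_le_div_of_nonneg_left hD0nn hsqk hmono
        linarith
      -- √ω ≤ √2 √k ≤ 2√k
      have hω2k : omegaK k ≤ 2 * k := by
        rw [omegaK]
        have h4 : Real.sqrt (1 + k ^ 2) ≤ Real.sqrt ((2*k)^2) := Real.sqrt_le_sqrt (by nlinarith)
        rwa [Real.sqrt_sq (by linarith)] at h4
      have hsqle : Real.sqrt (omegaK k) ≤ 2 * Real.sqrt k := by
        calc Real.sqrt (omegaK k) ≤ Real.sqrt (2 * k) := Real.sqrt_le_sqrt hω2k
          _ ≤ Real.sqrt 4 * Real.sqrt k := by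
              rw [← Real.sqrt_mul (by norm_num)]
              apply Real.sqrt_le_sqrt
              nlinarith
          _ = 2 * Real.sqrt k := by
              rw [show (4:ℝ) = 2^2 by norm_num, Real.sqrt_sq (by norm_num)]
      calc ‖hankel1 ν (k * t)‖ ≤ D0 / Real.sqrt k := h1
        _ ≤ C * (Real.sqrt (omegaK k))⁻¹ := by
            rw [div_le_iff₀ hsqk, mul_assoc]
            rw [hCdef]
            have h2 : (Real.sqrt (omegaK k))⁻¹ * Real.sqrt k ≥ 1/2 := by
              rw [ge_iff_le, le_inv_mul_iff₀ hsqω]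
              linarith
            nlinarith
  calc ‖modeV m R t k‖
      = Real.exp (-(μ * Real.pi / 2)) * t ^ ((3 : ℝ) / 2) * ‖hankel1 ν (k * t)‖ := habs
    _ ≤ 1 * t ^ ((3 : ℝ) / 2) * (C * omegaK k ^ (-(1 : ℝ) / 2)) := by
        apply mul_le_mul _ key (norm_nonneg _) (by positivity)
        apply mul_le_mul hexp1 le_rfl ht32.le zero_le_one
    _ = C * t ^ ((3 : ℝ) / 2) * omegaK k ^ (-(1 : ℝ) / 2) := by ring
end
end
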